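/- arXiv:0909.4828 — 5 statements merged into one kernel-verified Lean document; each statement's English description precedes it below -/
import Mathlib

section
/- Let X be a real-valued random variable with c.d.f. F_X and point masses P_X(x) = P(X = x), and let Θ ~ Uniform(0,1) be independent of X. Then the random variable F_X(X) − Θ·P_X(X) is uniformly distributed on [0,1]. In particular, if X has a continuous distribution (no atoms), then F_X(X) ~ Uniform(0,1). -/
open MeasureTheory ProbabilityTheory Set

/-- Auxiliary: a set each of whose points lies in a null "interval" below it is null. -/
lemma aux_null_of_cover (ν : Measure ℝ) (s : Set ℝ) (I : ℝ → Set ℝ)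
    (hmono : ∀ ⦃x y : ℝ⦄, x ≤ y → I x ⊆ I y)
    (hmem : ∀ x ∈ s, x ∈ I x) (h0 : ∀ x ∈ s, ν (I x) = 0) : ν s = 0 := by
  rcases Set.eq_empty_or_nonempty s with rfl | hne
  · simp
  by_cases hb : BddAbove s
  · by_cases hbs : ∃ x ∈ s, sSup s ≤ x
    · obtain ⟨x, hxs, hbx⟩ := hbs
      exact measure_mono_null
        (fun y hy => hmono ((le_csSup hb hy).trans hbx) (hmem y hy)) (h0 x hxs)
    · push_neg at hbs
      have hex : ∀ n : ℕ, ∃ x ∈ s, sSup s - 1 / (n + 1) < x := by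
        intro n
        have hpos : (0:ℝ) < 1 / (n + 1) := by positivity
        obtain ⟨x, hxs, hx⟩ := exists_lt_of_lt_csSup hne (by linarith : sSup s - 1/(n+1) < sSup s)
        exact ⟨x, hxs, hx⟩
      choose f hf hflt using hex
      refine measure_mono_null (fun y hy => ?_) (measure_iUnion_null fun n => h0 (f n) (hf n))
      have hyb : y < sSup s := hbs y hy
      obtain ⟨n, hn⟩ := exists_nat_one_div_lt (sub_pos.2 hyb)
      exact Set.mem_iUnion.2 ⟨n, hmono (by linarith [hflt n]) (hmem y hy)⟩
  · have hex : ∀ n : ℕ, ∃ x ∈ s, (n : ℝ) ≤ x := by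
      intro n
      by_contra h; push_neg at h
      exact hb ⟨n, fun x hx => (h x hx).le⟩
    choose f hf hfn using hex
    refine measure_mono_null (fun y hy => ?_) (measure_iUnion_null fun n => h0 (f n) (hf n))
    obtain ⟨n, hn⟩ := exists_nat_ge y
    exact Set.mem_iUnion.2 ⟨n, hmono (hn.trans (hfn n)) (hmem y hy)⟩

/-- `F_X(X) − Θ·P_X(X)` is uniform on `[0,1]`; in particular if `X`
has no atoms then `F_X(X)` is uniform on `[0,1]`. -/
theorem cdf_randomized_is_uniform
    {Ω : Type*} [MeasurableSpace Ω] (μ : Measure Ω) [IsProbabilityMeasure μ]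
    (X Θ : Ω → ℝ) (hX : Measurable X) (hΘ : Measurable Θ)
    (hunif : Measure.map Θ μ = volume.restrict (Set.Icc (0:ℝ) 1))
    (hindep : IndepFun X Θ μ)
    (F : ℝ → ℝ) (hF : ∀ x, F x = (μ {ω | X ω ≤ x}).toReal)
    (P : ℝ → ℝ) (hP : ∀ x, P x = (μ {ω | X ω = x}).toReal) :
    Measure.map (fun ω => F (X ω) - Θ ω * P (X ω)) μ = volume.restrict (Set.Icc (0:ℝ) 1)
    ∧ ((∀ x : ℝ, μ {ω | X ω = x} = 0) →
        Measure.map (fun ω => F (X ω)) μ = volume.restrict (Set.Icc (0:ℝ) 1)) := by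
  set ν : Measure ℝ := Measure.map X μ with hνdef
  haveI hνprob : IsProbabilityMeasure ν := Measure.isProbabilityMeasure_map hX.aemeasurable
  have hνs : ∀ s : Set ℝ, MeasurableSet s → ν s = μ (X ⁻¹' s) :=
    fun s hs => Measure.map_apply hX hs
  have hF' : ∀ x, F x = (ν (Iic x)).toReal := by
    intro x; rw [hF x, hνs _ measurableSet_Iic]; rfl
  have hP' : ∀ x, P x = (ν {x}).toReal := by
    intro x; rw [hP x, hνs _ (measurableSet_singleton x)]; rfl
  set G : ℝ → ℝ := fun x => (ν (Iio x)).toReal with hGdef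
  have hFmono : Monotone F := by
    intro a b hab
    rw [hF', hF']
    exact ENNReal.toReal_mono (measure_ne_top _ _) (measure_mono (Iic_subset_Iic.2 hab))
  have hGmono : Monotone G := by
    intro a b hab
    exact ENNReal.toReal_mono (measure_ne_top _ _) (measure_mono (Iio_subset_Iio hab))
  have hPeq : ∀ x, P x = F x - G x := by
    intro x
    have hsplit : ν (Iic x) = ν (Iio x) + ν {x} := by
      rw [← Set.Iio_union_right, measure_union (by simp) (measurableSet_singleton x)]
    rw [hP', hF', hGdef, hsplit,
      ENNReal.toReal_add (measure_ne_top _ _) (measure_ne_top _ _)]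
    ring
  have hPmeas : Measurable P := by
    have : P = fun x => F x - G x := funext hPeq
    rw [this]
    exact hFmono.measurable.sub hGmono.measurable
  have hU : Measurable (fun ω => F (X ω) - Θ ω * P (X ω)) :=
    (hFmono.measurable.comp hX).sub (hΘ.mul (hPmeas.comp hX))
  -- basic bounds
  have hPnn : ∀ x, 0 ≤ P x := fun x => by rw [hP']; exact ENNReal.toReal_nonneg
  have hGnn : ∀ x, 0 ≤ G x := fun x => ENNReal.toReal_nonneg
  have hFnn : ∀ x, 0 ≤ F x := fun x => by rw [hF']; exact ENNReal.toReal_nonneg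
  have hF1 : ∀ x, F x ≤ 1 := by
    intro x
    rw [hF']
    have := ENNReal.toReal_mono (by simp : (1:ENNReal) ≠ ⊤) (prob_le_one (μ := ν) (s := Iic x))
    simpa using this
  have hGF : ∀ x, G x ≤ F x := fun x => by have := hPnn x; rw [hPeq x] at this; linarith
  -- measure of Θ-preimages
  have hΘm : ∀ s : Set ℝ, MeasurableSet s → μ (Θ ⁻¹' s) = volume (s ∩ Icc 0 1) := by
    intro s hs
    rw [← Measure.map_apply hΘ hs, hunif, Measure.restrict_apply hs]
  have hEc : μ (Θ ⁻¹' Ioo 0 1)ᶜ = 0 := by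
    have h1 : μ (Θ ⁻¹' Ioo 0 1) = 1 := by
      rw [hΘm _ measurableSet_Ioo, Set.inter_eq_left.2 Set.Ioo_subset_Icc_self,
        Real.volume_Ioo]
      simp
    rw [measure_compl (hΘ measurableSet_Ioo) (measure_ne_top μ _), h1, measure_univ]
    simp
  -- the key computation
  have key : ∀ t : ℝ, μ ((fun ω => F (X ω) - Θ ω * P (X ω)) ⁻¹' Iic t)
      = ENNReal.ofReal (min t 1) := by
    intro t
    by_cases ht0 : t < 0
    · -- value is a.s. nonnegative
      rw [min_eq_left (by linarith : t ≤ 1), ENNReal.ofReal_eq_zero.2 ht0.le]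
      have hnull : μ (Θ ⁻¹' Ioi 1) = 0 := by
        rw [hΘm _ measurableSet_Ioi]
        have : Ioi (1:ℝ) ∩ Icc 0 1 = ∅ := by
          ext x; simp only [mem_inter_iff, mem_Ioi, mem_Icc, mem_empty_iff_false, iff_false]
          rintro ⟨h1, _, h2⟩; linarith
        rw [this, measure_empty]
      refine measure_mono_null (fun ω hω => ?_) hnull
      simp only [mem_preimage, mem_Iic] at hω
      simp only [mem_preimage, mem_Ioi]
      by_contra h; push_neg at h
      have h1 := hPnn (X ω); have h2 := hGF (X ω); have h3 := hGnn (X ω)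
      have h4 := hPeq (X ω)
      nlinarith
    · push_neg at ht0
      by_cases ht1 : 1 ≤ t
      · rw [min_eq_right ht1]
        have hsub : Θ ⁻¹' Ici 0 ⊆ (fun ω => F (X ω) - Θ ω * P (X ω)) ⁻¹' Iic t := by
          intro ω hω
          simp only [mem_preimage, mem_Ici] at hω
          simp only [mem_preimage, mem_Iic]
          have h1 := hPnn (X ω); have h2 := hF1 (X ω)
          nlinarith
        have h1 : μ (Θ ⁻¹' Ici 0) = 1 := by
          rw [hΘm _ measurableSet_Ici, Set.inter_eq_right.2 (fun x hx => hx.1),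
            Real.volume_Icc]
          simp
        refine le_antisymm (by simpa using prob_le_one) ?_
        rw [ENNReal.ofReal_one, ← h1]
        exact measure_mono hsub
      · push_neg at ht1
        rw [min_eq_left ht1.le]
        by_cases hteq : t = 0
        · subst hteq
          simp only [ENNReal.ofReal_zero]
          have hZ : ν {x | ν (Iic x) = 0} = 0 :=
            aux_null_of_cover ν _ (fun x => Iic x)
              (fun x y hxy => Iic_subset_Iic.2 hxy)
              (fun x _ => Set.mem_Iic.2 le_rfl) (fun x hx => hx)
          have hZμ : μ (X ⁻¹' {x | ν (Iic x) = 0}) = 0 :=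
            le_antisymm ((Measure.le_map_apply hX.aemeasurable _).trans hZ.le) zero_le
          refine measure_mono_null (fun ω hω => ?_) (measure_union_null hEc hZμ)
          simp only [mem_preimage, mem_Iic] at hω
          by_cases hEω : Θ ω ∈ Ioo (0:ℝ) 1
          · right
            simp only [mem_preimage, mem_setOf_eq]
            obtain ⟨hΘ0, hΘ1⟩ := hEω
            have h1 := hPnn (X ω); have h2 := hGF (X ω); have h3 := hGnn (X ω)
            have h4 := hPeq (X ω); have h5 := hFnn (X ω)
            have hFx0 : F (X ω) = 0 := by nlinarith
            have : (ν (Iic (X ω))).toReal = 0 := by rw [← hF']; exact hFx0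
            rcases ENNReal.toReal_eq_zero_iff _ |>.1 this with h | h
            · exact h
            · exact absurd h (measure_ne_top _ _)
          · exact Or.inl hEω
        · -- main case : 0 < t < 1
          have ht0' : 0 < t := lt_of_le_of_ne ht0 (Ne.symm hteq)
          set S : Set ℝ := {x | t ≤ F x} with hSdef
          have hSne : S.Nonempty := by
            have htend := tendsto_measure_Iic_atTop (μ := ν)
            rw [measure_univ] at htend
            have : ∀ᶠ x : ℝ in Filter.atTop, ENNReal.ofReal t < ν (Iic x) :=
              htend.eventually_const_lt (ENNReal.ofReal_lt_one.2 ht1)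
            obtain ⟨x, hx⟩ := this.exists
            refine ⟨x, ?_⟩
            have := (ENNReal.ofReal_lt_iff_lt_toReal ht0 (measure_ne_top _ _)).1 hx
            rw [hSdef, mem_setOf_eq, hF']
            linarith
          have hSbd : BddBelow S := by
            have hempty : ⋂ n : ℕ, Iic (-(n:ℝ)) = ∅ := by
              ext x
              simp only [mem_iInter, mem_Iic, mem_empty_iff_false, iff_false]
              push_neg
              obtain ⟨n, hn⟩ := exists_nat_gt (-x)
              exact ⟨n, by linarith⟩
            have hinf : (⨅ n : ℕ, ν (Iic (-(n:ℝ)))) = 0 := by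
              rw [← Antitone.measure_iInter
                (fun m n hmn => Iic_subset_Iic.2 (by exact_mod_cast neg_le_neg (Nat.cast_le.2 hmn)))
                (fun n => measurableSet_Iic.nullMeasurableSet) ⟨0, measure_ne_top _ _⟩,
                hempty, measure_empty]
            have hlt : (⨅ n : ℕ, ν (Iic (-(n:ℝ)))) < ENNReal.ofReal t := by
              rw [hinf]; exact ENNReal.ofReal_pos.2 ht0'
            obtain ⟨n, hn⟩ := iInf_lt_iff.1 hlt
            refine ⟨-(n:ℝ), fun x hx => ?_⟩
            by_contra h; push_neg at h
            have : ν (Iic x) ≤ ν (Iic (-(n:ℝ))) := measure_mono (Iic_subset_Iic.2 h.le)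
            have hlt : ν (Iic x) < ENNReal.ofReal t := lt_of_le_of_lt this hn
            have := (ENNReal.lt_ofReal_iff_toReal_lt (measure_ne_top _ _)).1 hlt
            rw [← hF'] at this
            exact absurd hx (by simp only [hSdef, mem_setOf_eq]; linarith)
          set q : ℝ := sInf S with hqdef
          -- F q ≥ t
          have hFq : ENNReal.ofReal t ≤ ν (Iic q) := by
            have hIic : Iic q = ⋂ n : ℕ, Iic (q + 1/(n+1)) := by
              ext x
              simp only [mem_Iic, mem_iInter]
              constructor
              · intro h n
                have : (0:ℝ) < 1/(n+1) := by positivity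
                linarith
              · intro h
                by_contra hx; push_neg at hx
                obtain ⟨n, hn⟩ := exists_nat_one_div_lt (sub_pos.2 hx)
                have := h n; linarith
            rw [hIic, Antitone.measure_iInter
              (fun m n hmn => Iic_subset_Iic.2 (by
                have : (1:ℝ)/(n+1) ≤ 1/(m+1) := by
                  apply one_div_le_one_div_of_le (by positivity)
                  exact_mod_cast by exact_mod_cast add_le_add_left (Nat.cast_le.2 hmn) 1
                linarith))
              (fun n => measurableSet_Iic.nullMeasurableSet) ⟨0, measure_ne_top _ _⟩]
            refine le_iInf fun n => ?_
            have hlt : q < q + 1/(n+1) := by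
              have : (0:ℝ) < 1/(n+1) := by positivity
              linarith
            obtain ⟨s, hsS, hs⟩ := (csInf_lt_iff hSbd hSne).1 hlt
            have h1 : ENNReal.ofReal t ≤ ν (Iic s) :=
              ENNReal.ofReal_le_of_le_toReal (by rw [← hF']; exact hsS)
            exact h1.trans (measure_mono (Iic_subset_Iic.2 hs.le))
          -- G q ≤ t
          have hGq : ν (Iio q) ≤ ENNReal.ofReal t := by
            have hIio : Iio q = ⋃ n : ℕ, Iic (q - 1/(n+1)) := by
              ext x
              simp only [mem_Iio, mem_iUnion, mem_Iic]
              constructor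
              · intro h
                obtain ⟨n, hn⟩ := exists_nat_one_div_lt (sub_pos.2 h)
                exact ⟨n, by linarith⟩
              · rintro ⟨n, hn⟩
                have : (0:ℝ) < 1/(n+1) := by positivity
                linarith
            rw [hIio, Monotone.measure_iUnion (fun m n hmn => Iic_subset_Iic.2 (by
              have : (1:ℝ)/(n+1) ≤ 1/(m+1) := by
                apply one_div_le_one_div_of_le (by positivity)
                exact_mod_cast by exact_mod_cast add_le_add_left (Nat.cast_le.2 hmn) 1
              linarith))]
            refine iSup_le fun n => ?_
            have hpos : (0:ℝ) < 1/(n+1) := by positivity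
            have hnotS : q - 1/(n+1) ∉ S := by
              intro h
              have := csInf_le hSbd h
              rw [← hqdef] at this
              linarith
            have hFlt : F (q - 1/(n+1)) < t := by
              by_contra h; push_neg at h; exact hnotS h
            rw [hF'] at hFlt
            exact ((ENNReal.lt_ofReal_iff_toReal_lt (measure_ne_top _ _)).2 hFlt).le
          have htFq : t ≤ F q := by
            have := ENNReal.toReal_mono (measure_ne_top ν _) hFq
            rwa [ENNReal.toReal_ofReal ht0, ← hF'] at this
          have hGqt : G q ≤ t := by
            have := ENNReal.toReal_mono ENNReal.ofReal_ne_top hGq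
            rwa [ENNReal.toReal_ofReal ht0] at this
          -- the sets
          set A : Set Ω := X ⁻¹' Iio q with hAdef
          set Bs : Set ℝ := {θ : ℝ | F q - θ * P q ≤ t} with hBsdef
          set B : Set Ω := X ⁻¹' {q} ∩ Θ ⁻¹' Bs with hBdef
          set E : Set Ω := Θ ⁻¹' Ioo 0 1 with hEdef
          have hBsm : MeasurableSet Bs := by
            have : Bs = (fun θ : ℝ => F q - θ * P q) ⁻¹' Iic t := rfl
            rw [this]
            exact (measurable_const.sub (measurable_id.mul_const _)) measurableSet_Iic
          -- the null set N
          set N : Set ℝ := {x | q < x ∧ ν (Ioc q x) = 0} with hNdef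
          have hNν : ν N = 0 :=
            aux_null_of_cover ν N (fun x => Ioc q x)
              (fun x y hxy => Ioc_subset_Ioc_right hxy)
              (fun x hx => Set.mem_Ioc.2 ⟨hx.1, le_rfl⟩) (fun x hx => hx.2)
          have hNμ : μ (X ⁻¹' N) = 0 :=
            le_antisymm ((Measure.le_map_apply hX.aemeasurable _).trans hNν.le) zero_le
          -- inclusion arguments
          have hBsub : B ⊆ (fun ω => F (X ω) - Θ ω * P (X ω)) ⁻¹' Iic t := by
            rintro ω ⟨h1, h2⟩
            have h1' : X ω = q := h1
            simp only [mem_preimage, mem_Iic]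
            rw [h1']
            exact h2
          have hAsub : A ∩ E ⊆ (fun ω => F (X ω) - Θ ω * P (X ω)) ⁻¹' Iic t := by
            rintro ω ⟨hA, hE⟩
            have hA' : X ω < q := hA
            obtain ⟨hΘ0, hΘ1⟩ : (0:ℝ) < Θ ω ∧ Θ ω < 1 := hE
            simp only [mem_preimage, mem_Iic]
            have hFle : F (X ω) ≤ G q := by
              rw [hF', hGdef]
              exact ENNReal.toReal_mono (measure_ne_top _ _)
                (measure_mono (fun y hy => lt_of_le_of_lt hy hA'))
            have := mul_nonneg hΘ0.le (hPnn (X ω))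
            linarith
          have hmain_sub : (fun ω => F (X ω) - Θ ω * P (X ω)) ⁻¹' Iic t
              ⊆ (A ∪ B) ∪ (Eᶜ ∪ X ⁻¹' N) := by
            intro ω hω
            simp only [mem_preimage, mem_Iic] at hω
            by_cases hEω : Θ ω ∈ Ioo (0:ℝ) 1
            swap
            · exact Or.inr (Or.inl hEω)
            obtain ⟨hΘ0, hΘ1⟩ := hEω
            rcases lt_trichotomy (X ω) q with hlt | heq | hgt
            · exact Or.inl (Or.inl hlt)
            · refine Or.inl (Or.inr ⟨heq, ?_⟩)
              show F q - Θ ω * P q ≤ t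
              rw [← heq]
              exact hω
            · refine Or.inr (Or.inr ?_)
              show X ω ∈ N
              refine ⟨hgt, ?_⟩
              have h1 : F q ≤ G (X ω) := by
                rw [hF', hGdef]
                exact ENNReal.toReal_mono (measure_ne_top _ _)
                  (measure_mono (fun y hy => lt_of_le_of_lt hy hgt))
              have h2 := hGF (X ω)
              have h3 := hPeq (X ω)
              have hFxt : F (X ω) = t := by nlinarith
              have hGxt : G (X ω) = t := by nlinarith
              have hFqt : F q = t := le_antisymm (by linarith) htFq
              have e1 : ν (Iic (X ω)) = ENNReal.ofReal t := by
                rw [← ENNReal.ofReal_toReal (measure_ne_top ν (Iic (X ω)))]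
                congr 1
                rw [← hF']
                exact hFxt
              have e2 : ν (Iic q) = ENNReal.ofReal t := by
                rw [← ENNReal.ofReal_toReal (measure_ne_top ν (Iic q))]
                congr 1
                rw [← hF']
                exact hFqt
              have e3 : ν (Iic q) + ν (Ioc q (X ω)) = ν (Iic (X ω)) := by
                rw [← measure_union (Iic_disjoint_Ioc le_rfl) measurableSet_Ioc,
                  Iic_union_Ioc_eq_Iic hgt.le]
              rw [e1, e2] at e3
              exact (ENNReal.add_right_inj ENNReal.ofReal_ne_top).1
                (e3.trans (add_zero _).symm)
          -- measure of A ∪ B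
          have hd : Disjoint A B := by
            rw [Set.disjoint_left]
            rintro ω hA ⟨hB1, _⟩
            have h1 : X ω < q := hA
            have h2 : X ω = q := hB1
            linarith
          have hBm : MeasurableSet B := (hX (measurableSet_singleton q)).inter (hΘ hBsm)
          have hμA : μ A = ENNReal.ofReal (G q) := by
            rw [hAdef, ← hνs _ measurableSet_Iio, hGdef,
              ENNReal.ofReal_toReal (measure_ne_top _ _)]
          have hμB : μ B = ENNReal.ofReal (t - G q) := by
            by_cases hPq0 : P q = 0
            · have hνq : ν {q} = 0 := by
                have : (ν {q}).toReal = 0 := by rw [← hP']; exact hPq0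
                rcases (ENNReal.toReal_eq_zero_iff _).1 this with h | h
                · exact h
                · exact absurd h (measure_ne_top _ _)
              have hμq : μ (X ⁻¹' {q}) = 0 := by
                rw [← hνs _ (measurableSet_singleton q)]; exact hνq
              have hB0 : μ B = 0 := measure_mono_null inter_subset_left hμq
              have hGqeq : G q = t := by
                have := hPeq q
                have := htFq
                linarith [le_antisymm hGqt (by linarith : t ≤ G q)]
              rw [hB0, hGqeq]
              simp
            · have hPqpos : 0 < P q := lt_of_le_of_ne (hPnn q) (Ne.symm hPq0)
              set c : ℝ := (F q - t) / P q with hcdef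
              have hc0 : 0 ≤ c := div_nonneg (by linarith) hPqpos.le
              have hc1 : c ≤ 1 := by
                rw [hcdef, div_le_one hPqpos]
                have := hPeq q
                linarith
              have hBsIci : Bs = Ici c := by
                ext θ
                simp only [hBsdef, mem_setOf_eq, mem_Ici, hcdef, div_le_iff₀ hPqpos]
                constructor <;> intro h <;> nlinarith
              have := hindep.measure_inter_preimage_eq_mul {q} (Ici c)
                (measurableSet_singleton q) measurableSet_Ici
              rw [hBdef, hBsIci, this]
              have hXq : μ (X ⁻¹' {q}) = ENNReal.ofReal (P q) := by
                rw [← hνs _ (measurableSet_singleton q), hP',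
                  ENNReal.ofReal_toReal (measure_ne_top _ _)]
              have hΘc : μ (Θ ⁻¹' Ici c) = ENNReal.ofReal (1 - c) := by
                rw [hΘm _ measurableSet_Ici]
                have : Ici c ∩ Icc (0:ℝ) 1 = Icc c 1 := by
                  ext x
                  simp only [mem_inter_iff, mem_Ici, mem_Icc]
                  constructor
                  · rintro ⟨h1, _, h3⟩; exact ⟨h1, h3⟩
                  · rintro ⟨h1, h2⟩; exact ⟨h1, le_trans hc0 h1, h2⟩
                rw [this, Real.volume_Icc]
              rw [hXq, hΘc, ← ENNReal.ofReal_mul (hPnn q)]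
              congr 1
              have hpc : P q * c = F q - t := by
                rw [hcdef, mul_div_cancel₀ _ hPq0]
              have := hPeq q
              nlinarith
          have hAB : μ (A ∪ B) = ENNReal.ofReal t := by
            rw [measure_union hd hBm, hμA, hμB,
              ← ENNReal.ofReal_add (hGnn q) (by linarith)]
            ring_nf
          -- combine
          have hup : μ ((fun ω => F (X ω) - Θ ω * P (X ω)) ⁻¹' Iic t) ≤ μ (A ∪ B) := by
            calc μ ((fun ω => F (X ω) - Θ ω * P (X ω)) ⁻¹' Iic t)
                ≤ μ ((A ∪ B) ∪ (Eᶜ ∪ X ⁻¹' N)) := measure_mono hmain_sub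
              _ ≤ μ (A ∪ B) + μ (Eᶜ ∪ X ⁻¹' N) := measure_union_le _ _
              _ = μ (A ∪ B) := by rw [measure_union_null hEc hNμ, add_zero]
          have hdown : μ (A ∪ B) ≤ μ ((fun ω => F (X ω) - Θ ω * P (X ω)) ⁻¹' Iic t) := by
            calc μ (A ∪ B) ≤ μ (((A ∩ E) ∪ B) ∪ Eᶜ) := by
                  refine measure_mono fun ω h => ?_
                  by_cases hE : ω ∈ E
                  · rcases h with h | h
                    · exact Or.inl (Or.inl ⟨h, hE⟩)
                    · exact Or.inl (Or.inr h)
                  · exact Or.inr hE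
              _ ≤ μ ((A ∩ E) ∪ B) + μ Eᶜ := measure_union_le _ _
              _ = μ ((A ∩ E) ∪ B) := by rw [hEc, add_zero]
              _ ≤ μ ((fun ω => F (X ω) - Θ ω * P (X ω)) ⁻¹' Iic t) :=
                  measure_mono (union_subset hAsub hBsub)
          exact le_antisymm (hup.trans_eq hAB) (hAB ▸ hdown)
  -- conclude
  have part1 : Measure.map (fun ω => F (X ω) - Θ ω * P (X ω)) μ
      = volume.restrict (Set.Icc (0:ℝ) 1) := by
    haveI : IsProbabilityMeasure (Measure.map (fun ω => F (X ω) - Θ ω * P (X ω)) μ) :=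
      Measure.isProbabilityMeasure_map hU.aemeasurable
    refine Measure.ext_of_Iic _ _ (fun t => ?_)
    rw [Measure.map_apply hU measurableSet_Iic, key t,
      Measure.restrict_apply measurableSet_Iic]
    have : Iic t ∩ Icc (0:ℝ) 1 = Icc 0 (min t 1) := by
      ext x
      simp only [mem_inter_iff, mem_Iic, mem_Icc, le_min_iff]
      tauto
    rw [this, Real.volume_Icc, sub_zero]
  refine ⟨part1, fun h => ?_⟩
  have hP0 : ∀ x, P x = 0 := fun x => by rw [hP x, h x]; simp
  have : (fun ω => F (X ω)) = (fun ω => F (X ω) - Θ ω * P (X ω)) := by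
    funext ω
    rw [hP0]
    ring
  rw [this]
  exact part1
end

section
/- The function ξ(x) = x − α x^β on [0,1], with β > 1 and 0 < α < 1/β, is a contraction (nonnegative, concave, ξ(x) < x on (0,1]), and its decay profile satisfies r(n) = sup_x ξ^{(n)}(x) = O(n^{1/(1−β)}). -/
open Set

/-- Bernoulli's inequality for nonpositive exponents: `1 - p*s ≤ (1+s)^(-p)`. -/
lemma bernoulli_neg {s p : ℝ} (hs : 0 ≤ s) (hp : 0 ≤ p) :
    1 - p * s ≤ (1 + s) ^ (-p) := by
  have h1s : (0:ℝ) < 1 + s := by linarith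
  rcases le_or_gt p 1 with hp1 | hp1
  · have h := rpow_one_add_le_one_add_mul_self (s := s) (by linarith) hp hp1
    have hA : (0:ℝ) < (1 + s) ^ p := Real.rpow_pos_of_pos h1s p
    rcases le_or_gt (1 - p * s) 0 with hneg | hpos
    · exact hneg.trans (Real.rpow_nonneg h1s.le _)
    · rw [Real.rpow_neg h1s.le, inv_eq_one_div, le_div_iff₀ hA]
      nlinarith [sq_nonneg (p * s)]
  · have ht : (-1:ℝ) ≤ -s / (1 + s) := by
      rw [neg_div, neg_le_neg_iff, div_le_one h1s]; linarith
    have h := one_add_mul_self_le_rpow_one_add ht hp1.le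
    have h1t : 1 + -s / (1 + s) = (1 + s)⁻¹ := by field_simp; ring
    rw [h1t] at h
    have h2 : ((1 + s)⁻¹) ^ p = (1 + s) ^ (-p) := by
      rw [← Real.rpow_neg_one (1 + s), ← Real.rpow_mul h1s.le]
      norm_num
    rw [h2] at h
    have h3 : s / (1 + s) ≤ s := by
      rw [div_le_iff₀ h1s]; nlinarith
    have h4 : p * (-s / (1 + s)) = -(p * (s / (1 + s))) := by ring
    calc 1 - p * s ≤ 1 + p * (-s / (1 + s)) := by
          rw [h4]
          have := mul_le_mul_of_nonneg_left h3 hp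
          linarith
      _ ≤ (1 + s) ^ (-p) := h

set_option maxHeartbeats 1000000 in
/-- `ξ(x) = x − α x^β` with `β > 1`, `0 < α < 1/β` is a contraction
on `[0,1]` with polynomial decay profile `r(n) = O(n^{1/(1−β)})`. -/
theorem polynomial_contraction_decay
    (α β : ℝ) (hβ : 1 < β) (hα0 : 0 < α) (hα : α < 1 / β)
    (ξ : ℝ → ℝ) (hξ : ∀ x : ℝ, ξ x = x - α * x ^ β) :
    (∀ x ∈ Set.Icc (0:ℝ) 1, 0 ≤ ξ x) ∧
    Set.MapsTo ξ (Set.Icc 0 1) (Set.Icc 0 1) ∧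
    ConcaveOn ℝ (Set.Icc 0 1) ξ ∧
    (∀ x ∈ Set.Ioc (0:ℝ) 1, ξ x < x) ∧
    (∃ C : ℝ, 0 < C ∧ ∀ n : ℕ, 1 ≤ n →
      (⨆ x : Set.Icc (0:ℝ) 1, ξ^[n] x) ≤ C * (n : ℝ) ^ (1 / (1 - β))) := by
  have hβ0 : (0:ℝ) < β := by linarith
  have hα1 : α < 1 := lt_of_lt_of_le hα (by rw [div_le_one hβ0]; linarith)
  have hαβ : α * β < 1 := by
    calc α * β < (1 / β) * β := by nlinarith
      _ = 1 := by field_simp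
  -- basic pointwise facts
  have hbound : ∀ x ∈ Set.Icc (0:ℝ) 1, α * x ^ β ≤ x ∧ 0 ≤ α * x ^ β := by
    intro x ⟨hx0, hx1⟩
    rcases eq_or_lt_of_le hx0 with rfl | hx0'
    · simp [Real.zero_rpow (by positivity : β ≠ 0)]
    · have h1 : x ^ β ≤ x ^ (1:ℝ) :=
        Real.rpow_le_rpow_of_exponent_ge hx0' hx1 (by linarith)
      rw [Real.rpow_one] at h1
      have hxb : 0 ≤ x ^ β := Real.rpow_nonneg hx0 β
      exact ⟨by nlinarith, by positivity⟩
  have hnonneg : ∀ x ∈ Set.Icc (0:ℝ) 1, 0 ≤ ξ x := by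
    intro x hx
    obtain ⟨h1, _⟩ := hbound x hx
    rw [hξ]; linarith
  have hmaps : Set.MapsTo ξ (Set.Icc 0 1) (Set.Icc 0 1) := by
    intro x hx
    obtain ⟨h1, h2⟩ := hbound x hx
    exact ⟨hnonneg x hx, by rw [hξ]; have := hx.2; linarith⟩
  have hlt : ∀ x ∈ Set.Ioc (0:ℝ) 1, ξ x < x := by
    intro x ⟨hx0, _⟩
    rw [hξ]
    have : 0 < α * x ^ β := by positivity
    linarith
  -- concavity
  have hconcave : ConcaveOn ℝ (Set.Icc (0:ℝ) 1) ξ := by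
    have hcvx : ConvexOn ℝ (Set.Ici (0:ℝ)) fun x : ℝ => x ^ β := convexOn_rpow hβ.le
    have h3 : ConcaveOn ℝ (Set.Icc (0:ℝ) 1)
        ((fun x : ℝ => x) + -(α • fun x : ℝ => x ^ β)) :=
      ((concaveOn_id (convex_Ici (0:ℝ))).add (hcvx.smul hα0.le).neg).subset
        (fun x hx => hx.1) (convex_Icc 0 1)
    convert h3 using 1
    funext x
    simp only [Pi.add_apply, Pi.neg_apply, Pi.smul_apply, smul_eq_mul]
    rw [hξ]; ring
  -- monotonicity on [0,1]
  have hcont : Continuous ξ := by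
    have : Continuous fun x : ℝ => x - α * x ^ β :=
      continuous_id.sub (continuous_const.mul (Real.continuous_rpow_const (by linarith)))
    convert this using 1; funext x; exact hξ x
  have hmono : StrictMonoOn ξ (Set.Icc (0:ℝ) 1) := by
    apply strictMonoOn_of_deriv_pos (convex_Icc 0 1) hcont.continuousOn
    intro x hx
    rw [interior_Icc] at hx
    have hd : HasDerivAt ξ (1 - α * (β * x ^ (β - 1))) x := by
      have h1 : HasDerivAt (fun x : ℝ => x ^ β) (β * x ^ (β - 1)) x :=
        Real.hasDerivAt_rpow_const (Or.inl hx.1.ne')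
      have h2 : HasDerivAt (fun x : ℝ => x - α * x ^ β)
          (1 - α * (β * x ^ (β - 1))) x :=
        (hasDerivAt_id x).sub (h1.const_mul α)
      exact h2.congr_of_eventuallyEq (Filter.Eventually.of_forall fun y => (hξ y))
    rw [hd.deriv]
    have hx1 : x ^ (β - 1) < 1 := Real.rpow_lt_one hx.1.le hx.2 (by linarith)
    have hxb : 0 ≤ x ^ (β - 1) := Real.rpow_nonneg hx.1.le _
    nlinarith
  -- decay profile setup
  set γ : ℝ := 1 / (β - 1) with hγdef
  have hβ1 : (0:ℝ) < β - 1 := by linarith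
  have hγ0 : 0 < γ := by positivity
  have hγβ : γ * (β - 1) = 1 := by rw [hγdef]; field_simp
  have h1α : (0:ℝ) < 1 - α := by linarith
  have hc2 : (1:ℝ) < (1 - α) ^ (1 - β) := by
    rw [Real.one_lt_rpow_iff_of_pos h1α]
    right; constructor <;> linarith
  set c : ℝ := min (α * (β - 1)) (min 1 ((1 - α) ^ (1 - β) - 1)) with hcdef
  have hc0 : 0 < c :=
    lt_min (by nlinarith) (lt_min one_pos (by linarith))
  have hc1 : c ≤ 1 := le_trans (min_le_right _ _) (min_le_left _ _)
  have hcα : c * γ ≤ α := by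
    have h := min_le_left (α * (β - 1)) (min 1 ((1 - α) ^ (1 - β) - 1))
    calc c * γ ≤ (α * (β - 1)) * γ := mul_le_mul_of_nonneg_right h hγ0.le
      _ = α * (γ * (β - 1)) := by ring
      _ = α := by rw [hγβ]; ring
  have hc3 : 1 + c ≤ (1 - α) ^ (1 - β) := by
    have h := min_le_right (α * (β - 1)) (min 1 ((1 - α) ^ (1 - β) - 1))
    have h2 := min_le_right (1:ℝ) ((1 - α) ^ (1 - β) - 1)
    rw [hcdef]
    linarith [le_trans h h2]
  set u : ℕ → ℝ := fun n => (c * n) ^ (-γ) with hudef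
  have hu_pos : ∀ n : ℕ, 1 ≤ n → 0 < u n := by
    intro n hn
    rw [hudef]
    apply Real.rpow_pos_of_pos
    have : (1:ℝ) ≤ (n:ℝ) := by exact_mod_cast hn
    positivity
  -- key one-step estimate
  have hkey : ∀ n : ℕ, 1 ≤ n → ξ (min (u n) 1) ≤ u (n + 1) := by
    intro n hn
    have hN1 : (1:ℝ) ≤ (n:ℝ) := by exact_mod_cast hn
    have hN0 : (0:ℝ) < (n:ℝ) := by linarith
    have hcN : 0 < c * (n:ℝ) := by positivity
    have hu1 : u (n + 1) = (c * ((n:ℝ) + 1)) ^ (-γ) := by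
      simp only [hudef]; push_cast; ring_nf
    rcases le_or_gt (u n) 1 with h | h
    · rw [min_eq_left h, hξ]
      have hun0 : 0 < u n := hu_pos n hn
      -- rewrite u (n+1)
      have hfac : c * ((n:ℝ) + 1) = (c * n) * (1 + 1 / n) := by field_simp
      have hBern : 1 - γ * (1 / (n:ℝ)) ≤ (1 + 1 / (n:ℝ)) ^ (-γ) :=
        bernoulli_neg (by positivity) hγ0.le
      have hlow : u n * (1 - γ * (1 / (n:ℝ))) ≤ u (n + 1) := by
        rw [hu1, hfac, Real.mul_rpow hcN.le (by positivity)]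
        exact mul_le_mul_of_nonneg_left hBern hun0.le
      -- rewrite (u n) ^ β
      have hγβ2 : -γ * β = -γ + (-1) := by linear_combination (-1 : ℝ) * hγβ
      have hub : (u n) ^ β = u n * (c * (n:ℝ))⁻¹ := by
        calc (u n) ^ β = ((c * (n:ℝ)) ^ (-γ)) ^ β := by rw [hudef]
          _ = (c * (n:ℝ)) ^ (-γ * β) := (Real.rpow_mul hcN.le _ _).symm
          _ = (c * (n:ℝ)) ^ (-γ + (-1)) := by rw [hγβ2]
          _ = (c * (n:ℝ)) ^ (-γ) * (c * (n:ℝ)) ^ (-1:ℝ) := Real.rpow_add hcN _ _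
          _ = u n * (c * (n:ℝ))⁻¹ := by rw [Real.rpow_neg_one]
      rw [hub]
      have ht : (0:ℝ) < (c * (n:ℝ))⁻¹ := inv_pos.mpr hcN
      have hNt : 1 / (n:ℝ) = c * (c * (n:ℝ))⁻¹ := by
        field_simp
      have hfin : γ * (1 / (n:ℝ)) * u n ≤ α * (u n * (c * (n:ℝ))⁻¹) := by
        rw [hNt]
        nlinarith [mul_le_mul_of_nonneg_right hcα (mul_nonneg hun0.le ht.le)]
      nlinarith [hlow, hfin]
    · rw [min_eq_right h.le, hξ, Real.one_rpow]
      have hcn_lt : c * (n:ℝ) < 1 := by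
        by_contra hcn
        push_neg at hcn
        exact absurd (Real.rpow_le_one_of_one_le_of_nonpos hcn (by linarith : -γ ≤ 0))
          (not_le.mpr h)
      have hstep : c * ((n:ℝ) + 1) ≤ (1 - α) ^ (1 - β) := by nlinarith
      have h2 : ((1 - α) ^ (1 - β)) ^ (-γ) ≤ (c * ((n:ℝ) + 1)) ^ (-γ) :=
        Real.rpow_le_rpow_of_nonpos (by positivity) hstep (by linarith)
      have h3 : ((1 - α) ^ (1 - β)) ^ (-γ) = 1 - α := by
        rw [← Real.rpow_mul h1α.le]
        have he : (1 - β) * (-γ) = 1 := by linear_combination hγβ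
        rw [he, Real.rpow_one]
      rw [hu1]
      calc (1:ℝ) - α * 1 = 1 - α := by ring
        _ = ((1 - α) ^ (1 - β)) ^ (-γ) := h3.symm
        _ ≤ _ := h2
  -- iterate bound
  have hiter : ∀ n : ℕ, 1 ≤ n → ∀ x ∈ Set.Icc (0:ℝ) 1, ξ^[n] x ≤ u n := by
    intro n
    induction n with
    | zero => omega
    | succ m ih =>
      intro _ x hx
      by_cases hm : m = 0
      · subst hm
        have h1 : ξ x ≤ x := by
          rw [hξ]; have := (hbound x hx).2; linarith
        have h2 : (1:ℝ) ≤ u 1 := by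
          have hcle : c * (((1:ℕ)):ℝ) ≤ 1 := by simpa using hc1
          have hcp : (0:ℝ) < c * (((1:ℕ)):ℝ) := by simpa using hc0
          calc (1:ℝ) = (1:ℝ) ^ (-γ) := (Real.one_rpow _).symm
            _ ≤ (c * (((1:ℕ)):ℝ)) ^ (-γ) :=
              Real.rpow_le_rpow_of_nonpos hcp hcle (by linarith)
            _ = u 1 := by rw [hudef]
        simpa using le_trans (le_trans h1 hx.2) h2
      · have hm1 : 1 ≤ m := Nat.one_le_iff_ne_zero.mpr hm
        have hy : ξ^[m] x ∈ Set.Icc (0:ℝ) 1 := hmaps.iterate m hx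
        have hym : ξ^[m] x ≤ u m := ih hm1 x hx
        rw [Function.iterate_succ_apply']
        have hwmem : min (u m) 1 ∈ Set.Icc (0:ℝ) 1 :=
          ⟨le_min (hu_pos m hm1).le zero_le_one, min_le_right _ _⟩
        exact le_trans (hmono.monotoneOn hy hwmem (le_min hym hy.2)) (hkey m hm1)
  -- conclusion
  refine ⟨hnonneg, hmaps, hconcave, hlt, c ^ (-γ), Real.rpow_pos_of_pos hc0 _, ?_⟩
  intro n hn
  have hN1 : (1:ℝ) ≤ (n:ℝ) := by exact_mod_cast hn
  have hexp : 1 / (1 - β) = -γ := by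
    rw [hγdef]
    have h : (1:ℝ) - β = -(β - 1) := by ring
    rw [h, div_neg]
  haveI : Nonempty (Set.Icc (0:ℝ) 1) := ⟨⟨0, by constructor <;> norm_num⟩⟩
  apply ciSup_le
  rintro ⟨x, hx⟩
  have h1 : ξ^[n] x ≤ u n := hiter n hn x hx
  have h2 : u n = c ^ (-γ) * (n:ℝ) ^ (-γ) := by
    rw [hudef]
    exact Real.mul_rpow hc0.le (by positivity)
  rw [hexp]
  calc ξ^[n] x ≤ u n := h1
    _ = c ^ (-γ) * (n:ℝ) ^ (-γ) := h2
end

section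
/- Let X be a continuous real-valued random variable with support ℝ, bounded unimodal density f_X satisfying, for some constants m_0, m_1 > 0, b ≥ a > 1, x_0 > 1: m_0|x|^{-b} ≤ f_X(x) ≤ m_1|x|^{-a} for all |x| > x_0. Then X has a regular tail: there exist γ ∈ (0, 1/2] and positive constants c_0, c_1, α_0, α_1 such that c_0 f_X(x)^{α_0} ≤ min(F_X(x), 1 − F_X(x)) ≤ c_1 f_X(x)^{α_1} for all x with min(F_X(x), 1 − F_X(x)) ≤ γ. -/
open MeasureTheory Set

/-- Upper bound for tail integral of a function dominated by `m' * t^(-p)`. -/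
lemma tail_int_upper {g : ℝ → ℝ} {m' p x : ℝ} (hm : 0 < m') (hp : 1 < p) (hx : 0 < x)
    (hg : IntegrableOn g (Set.Ioi x)) (hgb : ∀ t ∈ Set.Ioi x, g t ≤ m' * t ^ (-p)) :
    ∫ t in Set.Ioi x, g t ≤ m' / (p - 1) * x ^ (1 - p) := by
  have hpow : IntegrableOn (fun t : ℝ => m' * t ^ (-p)) (Set.Ioi x) :=
    (integrableOn_Ioi_rpow_of_lt (by linarith) hx).const_mul m'
  calc ∫ t in Set.Ioi x, g t ≤ ∫ t in Set.Ioi x, m' * t ^ (-p) :=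
        setIntegral_mono_on hg hpow measurableSet_Ioi hgb
    _ = m' * ∫ t in Set.Ioi x, t ^ (-p) := by rw [integral_const_mul]
    _ = m' * (-x ^ (-p + 1) / (-p + 1)) := by
        rw [integral_Ioi_rpow_of_lt (by linarith) hx]
    _ = m' / (p - 1) * x ^ (1 - p) := by
        rw [show (-p + 1 : ℝ) = 1 - p by ring]
        rw [show (1 - p : ℝ) = -(p - 1) by ring] at *
        rw [neg_div, ← div_neg, neg_neg]
        ring

/-- Lower bound for tail integral of a function dominating `m' * t^(-p)`. -/
lemma tail_int_lower {g : ℝ → ℝ} {m' p x : ℝ} (hm : 0 < m') (hp : 1 < p) (hx : 0 < x)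
    (hg : IntegrableOn g (Set.Ioi x)) (hgb : ∀ t ∈ Set.Ioi x, m' * t ^ (-p) ≤ g t) :
    m' / (p - 1) * x ^ (1 - p) ≤ ∫ t in Set.Ioi x, g t := by
  have hpow : IntegrableOn (fun t : ℝ => m' * t ^ (-p)) (Set.Ioi x) :=
    (integrableOn_Ioi_rpow_of_lt (by linarith) hx).const_mul m'
  calc m' / (p - 1) * x ^ (1 - p) = m' * (-x ^ (-p + 1) / (-p + 1)) := by
        rw [show (-p + 1 : ℝ) = 1 - p by ring]
        rw [show (1 - p : ℝ) = -(p - 1) by ring]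
        rw [neg_div, ← div_neg, neg_neg]
        ring
    _ = m' * ∫ t in Set.Ioi x, t ^ (-p) := by
        rw [integral_Ioi_rpow_of_lt (by linarith) hx]
    _ = ∫ t in Set.Ioi x, m' * t ^ (-p) := by rw [integral_const_mul]
    _ ≤ ∫ t in Set.Ioi x, g t := setIntegral_mono_on hpow hg measurableSet_Ioi hgb

/-- Algebraic step: converting polynomial bounds in `y` into powers of `fx`. -/
lemma alg_aux {T fx y m₀ m₁ a b : ℝ} (hm₀ : 0 < m₀) (hm₁ : 0 < m₁) (ha : 1 < a) (hab : a ≤ b)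
    (hy : 0 < y) (h1 : m₀ / (b - 1) * y ^ (1 - b) ≤ T) (h2 : T ≤ m₁ / (a - 1) * y ^ (1 - a))
    (h3 : m₀ * y ^ (-b) ≤ fx) (h4 : fx ≤ m₁ * y ^ (-a)) :
    m₀ / (b - 1) * (1 / m₁) ^ ((b - 1) / a) * fx ^ ((b - 1) / a) ≤ T ∧
      T ≤ m₁ / (a - 1) * (1 / m₀) ^ ((a - 1) / b) * fx ^ ((a - 1) / b) := by
  have hb : 1 < b := lt_of_lt_of_le ha hab
  have hfx : 0 < fx := lt_of_lt_of_le (by positivity) h3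
  constructor
  · -- from h4 : fx / m₁ ≤ y ^ (-a), raise to power (b-1)/a ≥ 0
    have e1 : fx / m₁ ≤ y ^ (-a) := (div_le_iff₀ hm₁).2 (by linarith [h4])
    have e2 : (fx / m₁) ^ ((b - 1) / a) ≤ (y ^ (-a)) ^ ((b - 1) / a) :=
      Real.rpow_le_rpow (div_nonneg hfx.le hm₁.le) e1
        (div_nonneg (by linarith) (by linarith))
    have e3 : (y ^ (-a) : ℝ) ^ ((b - 1) / a) = y ^ (1 - b) := by
      rw [← Real.rpow_mul hy.le]
      congr 1
      have hane : a ≠ 0 := by linarith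
      field_simp
      ring
    have e4 : (fx / m₁) ^ ((b - 1) / a) = (1 / m₁) ^ ((b - 1) / a) * fx ^ ((b - 1) / a) := by
      rw [div_eq_mul_inv, ← one_div, Real.mul_rpow hfx.le (by positivity), mul_comm]
    calc m₀ / (b - 1) * (1 / m₁) ^ ((b - 1) / a) * fx ^ ((b - 1) / a)
        = m₀ / (b - 1) * (fx / m₁) ^ ((b - 1) / a) := by rw [e4]; ring
      _ ≤ m₀ / (b - 1) * y ^ (1 - b) := by
          apply mul_le_mul_of_nonneg_left _ (le_of_lt (div_pos hm₀ (by linarith)))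
          rw [← e3]; exact e2
      _ ≤ T := h1
  · -- from h3 : y ^ (-b) ≤ fx / m₀, raise to power (a-1)/b ≥ 0
    have e1 : y ^ (-b) ≤ fx / m₀ := (le_div_iff₀ hm₀).2 (by linarith [h3])
    have e2 : (y ^ (-b) : ℝ) ^ ((a - 1) / b) ≤ (fx / m₀) ^ ((a - 1) / b) :=
      Real.rpow_le_rpow (Real.rpow_nonneg hy.le _) e1
        (div_nonneg (by linarith) (by linarith))
    have e3 : (y ^ (-b) : ℝ) ^ ((a - 1) / b) = y ^ (1 - a) := by
      rw [← Real.rpow_mul hy.le]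
      congr 1
      have hbne : b ≠ 0 := by linarith
      field_simp
      ring
    have e4 : (fx / m₀) ^ ((a - 1) / b) = (1 / m₀) ^ ((a - 1) / b) * fx ^ ((a - 1) / b) := by
      rw [div_eq_mul_inv, ← one_div, Real.mul_rpow hfx.le (by positivity), mul_comm]
    calc T ≤ m₁ / (a - 1) * y ^ (1 - a) := h2
      _ = m₁ / (a - 1) * ((y ^ (-b) : ℝ) ^ ((a - 1) / b)) := by rw [e3]
      _ ≤ m₁ / (a - 1) * (fx / m₀) ^ ((a - 1) / b) :=
          mul_le_mul_of_nonneg_left e2 (le_of_lt (div_pos hm₁ (by linarith)))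
      _ = m₁ / (a - 1) * (1 / m₀) ^ ((a - 1) / b) * fx ^ ((a - 1) / b) := by rw [e4]; ring

/-- a bounded unimodal density with full support and polynomial
tail bounds `m₀|x|^{-b} ≤ f(x) ≤ m₁|x|^{-a}` (`b ≥ a > 1`) has a regular tail. -/
theorem regular_tail_of_polynomial_tail
    (f : ℝ → ℝ) (hfpos : ∀ x, 0 < f x)
    (hfint : (∫ x, f x) = 1)
    (hbdd : ∃ M : ℝ, ∀ x, f x ≤ M)
    (m : ℝ) (hmono : MonotoneOn f (Set.Iic m)) (hanti : AntitoneOn f (Set.Ici m))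
    (F : ℝ → ℝ) (hF : ∀ x, F x = ∫ y in Set.Iic x, f y)
    (m₀ m₁ a b x₀ : ℝ) (hm₀ : 0 < m₀) (hm₁ : 0 < m₁)
    (ha : 1 < a) (hab : a ≤ b) (hx₀ : 1 < x₀)
    (htail : ∀ x : ℝ, x₀ < |x| → m₀ * |x| ^ (-b) ≤ f x ∧ f x ≤ m₁ * |x| ^ (-a)) :
    ∃ γ ∈ Set.Ioc (0:ℝ) (1/2), ∃ c₀ c₁ α₀ α₁ : ℝ,
      0 < c₀ ∧ 0 < c₁ ∧ 0 < α₀ ∧ 0 < α₁ ∧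
      ∀ x : ℝ, min (F x) (1 - F x) ≤ γ →
        c₀ * f x ^ α₀ ≤ min (F x) (1 - F x) ∧
        min (F x) (1 - F x) ≤ c₁ * f x ^ α₁ := by
  have hb : 1 < b := lt_of_lt_of_le ha hab
  -- integrability of f
  have hint : Integrable f := by
    by_contra h
    rw [integral_undef h] at hfint
    norm_num at hfint
  -- positivity of set integrals of f
  have hpos : ∀ s : Set ℝ, volume s ≠ 0 → 0 < ∫ y in s, f y := by
    intro s hs
    rw [setIntegral_pos_iff_support_of_nonneg_ae
      (Filter.Eventually.of_forall fun x => (hfpos x).le) hint.integrableOn]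
    have : Function.support f = Set.univ := by
      ext x; simp [Function.mem_support, (hfpos x).ne']
    rw [this, Set.univ_inter]
    exact hs.bot_lt
  -- F is strictly monotone
  have hFmono : ∀ x y : ℝ, x < y → F x < F y := by
    intro x y hxy
    have hsub : F y - F x = ∫ t in x..y, f t := by
      rw [hF, hF]
      exact intervalIntegral.integral_Iic_sub_Iic hint.integrableOn hint.integrableOn
    have : (0:ℝ) < ∫ t in x..y, f t := by
      rw [intervalIntegral.integral_of_le hxy.le]
      apply hpos
      rw [Real.volume_Ioc]
      exact (ENNReal.ofReal_pos.2 (by linarith)).ne'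
    linarith [hsub]
  -- tail formula
  have hFtail : ∀ x : ℝ, 1 - F x = ∫ y in Set.Ioi x, f y := by
    intro x
    have := intervalIntegral.integral_Iic_add_Ioi (μ := volume) (f := f) (b := x)
      hint.integrableOn hint.integrableOn
    rw [hfint] at this
    rw [hF]
    linarith
  -- choose γ
  set γ : ℝ := min (min (F (-(x₀+1))) (1 - F (x₀+1))) (1/3) with hγdef
  have hγ1 : 0 < F (-(x₀+1)) := by
    rw [hF]
    apply hpos
    simp [Real.volume_Iic]
  have hγ2 : 0 < 1 - F (x₀+1) := by
    rw [hFtail]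
    apply hpos
    simp [Real.volume_Ioi]
  have hγpos : 0 < γ := lt_min (lt_min hγ1 hγ2) (by norm_num)
  have hγ3 : γ ≤ 1/3 := min_le_right _ _
  -- constants
  refine ⟨γ, ⟨hγpos, by linarith⟩,
    m₀ / (b - 1) * (1 / m₁) ^ ((b - 1) / a),
    m₁ / (a - 1) * (1 / m₀) ^ ((a - 1) / b),
    (b - 1) / a, (a - 1) / b,
    mul_pos (div_pos hm₀ (by linarith)) (Real.rpow_pos_of_pos (by positivity) _),
    mul_pos (div_pos hm₁ (by linarith)) (Real.rpow_pos_of_pos (by positivity) _),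
    div_pos (by linarith) (by linarith), div_pos (by linarith) (by linarith), ?_⟩
  intro x hx
  rcases min_le_iff.mp hx with hcase | hcase
  · -- left tail : F x ≤ γ, so x ≤ -(x₀+1)
    have hxle : x ≤ -(x₀+1) := by
      by_contra h
      push_neg at h
      have := hFmono _ _ h
      have : F (-(x₀+1)) ≤ γ := le_of_lt (lt_of_lt_of_le this hcase)
      have : F (-(x₀+1)) ≤ F (-(x₀+1)) := le_refl _
      have hle : γ ≤ F (-(x₀+1)) := le_trans (min_le_left _ _) (min_le_left _ _)
      linarith [hFmono _ _ h]
    have hmin : min (F x) (1 - F x) = F x := by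
      apply min_eq_left
      have : F x ≤ 1/3 := le_trans hcase hγ3
      linarith
    -- F x = ∫ t in Ioi (-x), f (-t)
    have hFx : F x = ∫ t in Set.Ioi (-x), f (-t) := by
      rw [integral_comp_neg_Ioi, neg_neg, hF]
    have hnx : x₀ < -x := by linarith
    have hnx0 : 0 < -x := by linarith
    have hgb : ∀ t ∈ Set.Ioi (-x), m₀ * t ^ (-b) ≤ f (-t) ∧ f (-t) ≤ m₁ * t ^ (-a) := by
      intro t ht
      have htpos : 0 < t := lt_trans hnx0 ht
      have habs : |(-t)| = t := by rw [abs_neg, abs_of_pos htpos]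
      have := htail (-t) (by rw [habs]; exact lt_trans hnx ht)
      rwa [habs] at this
    have hgint : IntegrableOn (fun t => f (-t)) (Set.Ioi (-x)) :=
      hint.comp_neg.integrableOn
    have h1 : m₀ / (b - 1) * (-x) ^ (1 - b) ≤ F x := by
      rw [hFx]
      exact tail_int_lower hm₀ hb hnx0 hgint (fun t ht => (hgb t ht).1)
    have h2 : F x ≤ m₁ / (a - 1) * (-x) ^ (1 - a) := by
      rw [hFx]
      exact tail_int_upper hm₁ ha hnx0 hgint (fun t ht => (hgb t ht).2)
    have hfb := htail x (by rw [abs_of_neg (by linarith : x < 0)]; exact hnx)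
    rw [abs_of_neg (by linarith : x < 0)] at hfb
    have := alg_aux hm₀ hm₁ ha hab hnx0 h1 h2 hfb.1 hfb.2
    rw [hmin]
    exact this
  · -- right tail : 1 - F x ≤ γ, so x₀ + 1 ≤ x
    have hxge : x₀ + 1 ≤ x := by
      by_contra h
      push_neg at h
      have hle : γ ≤ 1 - F (x₀+1) := le_trans (min_le_left _ _) (min_le_right _ _)
      linarith [hFmono _ _ h]
    have hmin : min (F x) (1 - F x) = 1 - F x := by
      apply min_eq_right
      have : 1 - F x ≤ 1/3 := le_trans hcase hγ3
      linarith
    have hx0 : 0 < x := by linarith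
    have hxx₀ : x₀ < x := by linarith
    have hgb : ∀ t ∈ Set.Ioi x, m₀ * t ^ (-b) ≤ f t ∧ f t ≤ m₁ * t ^ (-a) := by
      intro t ht
      have htpos : 0 < t := lt_trans hx0 ht
      have habs : |t| = t := abs_of_pos htpos
      have := htail t (by rw [habs]; exact lt_trans hxx₀ ht)
      rwa [habs] at this
    have h1 : m₀ / (b - 1) * x ^ (1 - b) ≤ 1 - F x := by
      rw [hFtail]
      exact tail_int_lower hm₀ hb hx0 hint.integrableOn (fun t ht => (hgb t ht).1)
    have h2 : 1 - F x ≤ m₁ / (a - 1) * x ^ (1 - a) := by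
      rw [hFtail]
      exact tail_int_upper hm₁ ha hx0 hint.integrableOn (fun t ht => (hgb t ht).2)
    have hfb := htail x (by rw [abs_of_pos hx0]; exact hxx₀)
    rw [abs_of_pos hx0] at hfb
    have := alg_aux hm₀ hm₁ ha hab hx0 h1 h2 hfb.1 hfb.2
    rw [hmin]
    exact this
end

section
/- Let X be a continuous real-valued random variable with support ℝ, bounded unimodal density f_X satisfying, for some 0 < m_0 < m_1, a ≥ 1, b > 0, x_0 > 1: m_0 e^{-b|x|^a} ≤ f_X(x) ≤ m_1 e^{-b|x|^a} for all |x| > x_0. Then X has a regular tail, i.e., there exist γ ∈ (0,1/2] and positive constants c_0, c_1, α_0, α_1 with c_0 f_X(x)^{α_0} ≤ min(F_X(x), 1 − F_X(x)) ≤ c_1 f_X(x)^{α_1} whenever min(F_X(x), 1 − F_X(x)) ≤ γ. -/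
open MeasureTheory Set

lemma exp_int_Ioi (k x : ℝ) (hk : 0 < k) :
    ∫ t in Ioi x, Real.exp (-(k * t)) = Real.exp (-(k * x)) / k := by
  have h := integral_comp_mul_left_Ioi (fun u => Real.exp (-u)) x hk
  simp only [smul_eq_mul] at h
  rw [h, integral_exp_neg_Ioi]
  field_simp

lemma exp_int_Ioi_integrable (k x : ℝ) (hk : 0 < k) :
    IntegrableOn (fun t => Real.exp (-(k * t))) (Ioi x) := by
  simpa [neg_mul] using exp_neg_integrableOn_Ioi x hk

lemma tail_bound (g : ℝ → ℝ) (hgpos : ∀ t, 0 ≤ g t) (hint : Integrable g)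
    (m₁ b a x : ℝ) (hm₁ : 0 ≤ m₁) (hb : 0 < b) (ha : 1 ≤ a) (hx : 1 ≤ x)
    (hanti : AntitoneOn g (Ici x))
    (hub : ∀ t, x < t → g t ≤ m₁ * Real.exp (-b * t ^ a)) :
    g (x + 1) ≤ (∫ t in Ioi x, g t) ∧
      (∫ t in Ioi x, g t) ≤ m₁ / b * Real.exp (-b * x ^ a) := by
  have hx0 : 0 < x := lt_of_lt_of_le one_pos hx
  constructor
  · -- lower bound
    have h1 : g (x + 1) * (volume (Ioc x (x + 1))).toReal ≤ ∫ t in Ioc x (x + 1), g t := by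
      apply setIntegral_ge_of_const_le_real measurableSet_Ioc
      · simp [Real.volume_Ioc]
      · intro t ht
        exact hanti (mem_Ici.2 ht.1.le) (mem_Ici.2 (by linarith)) ht.2
      · exact hint.integrableOn
    have h2 : (∫ t in Ioc x (x + 1), g t) ≤ ∫ t in Ioi x, g t := by
      apply setIntegral_mono_set hint.integrableOn
      · filter_upwards with t using hgpos t
      · exact HasSubset.Subset.eventuallyLE Ioc_subset_Ioi_self
    have hvol : (volume (Ioc x (x + 1))).toReal = 1 := by
      simp [Real.volume_Ioc]
    rw [hvol, mul_one] at h1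
    linarith
  · -- upper bound
    set k := b * x ^ (a - 1) with hk
    have hxa1 : (1:ℝ) ≤ x ^ (a - 1) := by
      calc (1:ℝ) = 1 ^ (a - 1) := (Real.one_rpow _).symm
      _ ≤ x ^ (a - 1) := Real.rpow_le_rpow zero_le_one hx (by linarith)
    have hkpos : 0 < k := mul_pos hb (by linarith)
    have hle : ∀ t ∈ Ioi x, g t ≤ m₁ * Real.exp (-(k * t)) := by
      intro t ht
      have htx : x < t := ht
      have ht0 : 0 < t := lt_trans hx0 htx
      have hta : x ^ (a - 1) * t ≤ t ^ a := by
        have h1 : x ^ (a - 1) ≤ t ^ (a - 1) :=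
          Real.rpow_le_rpow hx0.le htx.le (by linarith)
        have h2 : t ^ a = t ^ (a - 1) * t := by
          rw [← Real.rpow_add_one ht0.ne' (a - 1)]; ring_nf
        nlinarith
      calc g t ≤ m₁ * Real.exp (-b * t ^ a) := hub t htx
      _ ≤ m₁ * Real.exp (-(k * t)) := by
          apply mul_le_mul_of_nonneg_left _ hm₁
          apply Real.exp_le_exp.2
          rw [hk]; nlinarith
    have hmono : (∫ t in Ioi x, g t) ≤ ∫ t in Ioi x, m₁ * Real.exp (-(k * t)) := by
      apply setIntegral_mono_on hint.integrableOn
        ((exp_int_Ioi_integrable k x hkpos).const_mul m₁) measurableSet_Ioi hle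
    have hval : (∫ t in Ioi x, m₁ * Real.exp (-(k * t))) = m₁ * (Real.exp (-(k * x)) / k) := by
      rw [integral_const_mul, exp_int_Ioi k x hkpos]
    have hkx : k * x = b * x ^ a := by
      rw [hk]
      have : x ^ a = x ^ (a - 1) * x := by
        rw [← Real.rpow_add_one hx0.ne' (a - 1)]; ring_nf
      rw [this]; ring
    rw [hval, hkx] at hmono
    have hbk : b ≤ k := by
      rw [hk]; nlinarith
    calc (∫ t in Ioi x, g t) ≤ m₁ * (Real.exp (-(b * x ^ a)) / k) := hmono
    _ ≤ m₁ * (Real.exp (-(b * x ^ a)) / b) := by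
        apply mul_le_mul_of_nonneg_left _ hm₁
        exact div_le_div_of_nonneg_left (Real.exp_pos _).le hb hbk
    _ = m₁ / b * Real.exp (-b * x ^ a) := by rw [neg_mul]; ring

lemma minmax_bounds
    (m₀ m₁ M γ b a y fx T S : ℝ)
    (hm₀ : 0 < m₀) (hm₁ : 0 < m₁) (hM : 1 ≤ M) (hγ : 0 < γ)
    (hb : 0 < b) (ha : 1 ≤ a) (hy : 1 ≤ y)
    (hfl : m₀ * Real.exp (-b * y ^ a) ≤ fx)
    (hfu : fx ≤ m₁ * Real.exp (-b * y ^ a))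
    (hfM : fx ≤ M)
    (hT1 : m₀ * Real.exp (-b * (y + 1) ^ a) ≤ T)
    (hT2 : T ≤ m₁ / b * Real.exp (-b * y ^ a))
    (hS : γ ≤ S) :
    min (m₀ / m₁ ^ ((2:ℝ) ^ a)) (γ / M ^ ((2:ℝ) ^ a)) * fx ^ ((2:ℝ) ^ a) ≤ min T S ∧
      min T S ≤ m₁ / (b * m₀) * fx ^ (1:ℝ) := by
  set α := (2:ℝ) ^ a with hα
  set E := Real.exp (-b * y ^ a) with hE
  have hEpos : 0 < E := Real.exp_pos _
  have hfx : 0 < fx := lt_of_lt_of_le (mul_pos hm₀ hEpos) hfl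
  have hαpos : 0 < α := Real.rpow_pos_of_pos two_pos a
  have hm₁α : 0 < m₁ ^ α := Real.rpow_pos_of_pos hm₁ α
  have hMα : 0 < M ^ α := Real.rpow_pos_of_pos (lt_of_lt_of_le one_pos hM) α
  constructor
  · apply le_min
    · -- ≤ T
      have h1 : fx ^ α ≤ (m₁ * E) ^ α := Real.rpow_le_rpow hfx.le hfu hαpos.le
      have h2 : (m₁ * E) ^ α = m₁ ^ α * E ^ α := Real.mul_rpow hm₁.le hEpos.le
      have h3 : E ^ α = Real.exp (-b * y ^ a * α) := by
        rw [hE, ← Real.exp_mul]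
      have h4 : Real.exp (-b * y ^ a * α) ≤ Real.exp (-b * (y + 1) ^ a) := by
        apply Real.exp_le_exp.2
        have h5 : (y + 1) ^ a ≤ (2 * y) ^ a :=
          Real.rpow_le_rpow (by linarith) (by linarith) (by linarith)
        have h6 : (2 * y) ^ a = α * y ^ a := by
          rw [hα, Real.mul_rpow (by norm_num) (by linarith)]
        nlinarith
      calc min (m₀ / m₁ ^ α) (γ / M ^ α) * fx ^ α
          ≤ m₀ / m₁ ^ α * fx ^ α := by
            apply mul_le_mul_of_nonneg_right (min_le_left _ _)
              (Real.rpow_pos_of_pos hfx α).le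
      _ ≤ m₀ / m₁ ^ α * (m₁ ^ α * E ^ α) := by
            apply mul_le_mul_of_nonneg_left _ (div_pos hm₀ hm₁α).le
            rw [← h2]; exact h1
      _ = m₀ * E ^ α := by field_simp
      _ = m₀ * Real.exp (-b * y ^ a * α) := by rw [h3]
      _ ≤ m₀ * Real.exp (-b * (y + 1) ^ a) := mul_le_mul_of_nonneg_left h4 hm₀.le
      _ ≤ T := hT1
    · -- ≤ S
      have h1 : fx ^ α ≤ M ^ α := Real.rpow_le_rpow hfx.le hfM hαpos.le
      calc min (m₀ / m₁ ^ α) (γ / M ^ α) * fx ^ α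
          ≤ γ / M ^ α * fx ^ α := by
            apply mul_le_mul_of_nonneg_right (min_le_right _ _)
              (Real.rpow_pos_of_pos hfx α).le
      _ ≤ γ / M ^ α * M ^ α := mul_le_mul_of_nonneg_left h1 (div_pos hγ hMα).le
      _ = γ := by field_simp
      _ ≤ S := hS
  · calc min T S ≤ T := min_le_left _ _
    _ ≤ m₁ / b * E := hT2
    _ = m₁ / (b * m₀) * (m₀ * E) := by field_simp
    _ ≤ m₁ / (b * m₀) * fx := by
        apply mul_le_mul_of_nonneg_left hfl (div_pos hm₁ (mul_pos hb hm₀)).le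
    _ = m₁ / (b * m₀) * fx ^ (1:ℝ) := by rw [Real.rpow_one]

/-- a bounded unimodal density with full support and
stretched-exponential tail bounds `m₀e^{-b|x|^a} ≤ f(x) ≤ m₁e^{-b|x|^a}`
(`a ≥ 1`, `b > 0`) has a regular tail. -/
theorem regular_tail_of_exponential_tail
    (f : ℝ → ℝ) (hfpos : ∀ x, 0 < f x)
    (hfint : (∫ x, f x) = 1)
    (hbdd : ∃ M : ℝ, ∀ x, f x ≤ M)
    (m : ℝ) (hmono : MonotoneOn f (Set.Iic m)) (hanti : AntitoneOn f (Set.Ici m))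
    (F : ℝ → ℝ) (hF : ∀ x, F x = ∫ y in Set.Iic x, f y)
    (m₀ m₁ a b x₀ : ℝ) (hm₀ : 0 < m₀) (hm₁ : m₀ < m₁)
    (ha : 1 ≤ a) (hb : 0 < b) (hx₀ : 1 < x₀)
    (htail : ∀ x : ℝ, x₀ < |x| →
      m₀ * Real.exp (-b * |x| ^ a) ≤ f x ∧ f x ≤ m₁ * Real.exp (-b * |x| ^ a)) :
    ∃ γ ∈ Set.Ioc (0:ℝ) (1/2), ∃ c₀ c₁ α₀ α₁ : ℝ,
      0 < c₀ ∧ 0 < c₁ ∧ 0 < α₀ ∧ 0 < α₁ ∧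
      ∀ x : ℝ, min (F x) (1 - F x) ≤ γ →
        c₀ * f x ^ α₀ ≤ min (F x) (1 - F x) ∧
        min (F x) (1 - F x) ≤ c₁ * f x ^ α₁ := by
  obtain ⟨M, hM⟩ := hbdd
  set M' := max M 1 with hM'def
  have hM1 : (1:ℝ) ≤ M' := le_max_right _ _
  have hfM : ∀ x, f x ≤ M' := fun x => (hM x).trans (le_max_left _ _)
  have hfnn : ∀ x, 0 ≤ f x := fun x => (hfpos x).le
  have hm₁pos : 0 < m₁ := hm₀.trans hm₁
  -- integrability
  have hint : Integrable f := by
    by_contra h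
    rw [integral_undef h] at hfint; norm_num at hfint
  -- F facts
  have hFIoi : ∀ x, 1 - F x = ∫ t in Ioi x, f t := by
    intro x
    have h := intervalIntegral.integral_Iic_add_Ioi (μ := volume) (b := x)
      hint.integrableOn hint.integrableOn
    rw [hfint, hF x] at *
    linarith
  have hFmono : Monotone F := by
    intro u v huv
    rw [hF u, hF v]
    exact setIntegral_mono_set hint.integrableOn (ae_of_all _ fun t => hfnn t)
      (HasSubset.Subset.eventuallyLE (Iic_subset_Iic.2 huv))
  -- threshold
  set x₁ := max (x₀ + 1) (|m| + 1) with hx₁def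
  have hx₁x₀ : x₀ + 1 ≤ x₁ := le_max_left _ _
  have hx₁m : |m| + 1 ≤ x₁ := le_max_right _ _
  have hx₁1 : (1:ℝ) ≤ x₁ := by
    have := abs_nonneg m; linarith
  have hx₁0 : (0:ℝ) < x₁ := by linarith
  have hmabs : m ≤ |m| := le_abs_self m
  have hmabs' : -|m| ≤ m := neg_abs_le m
  -- right tail bounds
  have right : ∀ x, x₁ ≤ x →
      f (x + 1) ≤ 1 - F x ∧ 1 - F x ≤ m₁ / b * Real.exp (-b * x ^ a) := by
    intro x hx
    have hx1 : (1:ℝ) ≤ x := le_trans hx₁1 hx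
    have h := tail_bound f hfnn hint m₁ b a x hm₁pos.le hb ha hx1
      (hanti.mono (Ici_subset_Ici.2 (by linarith)))
      (fun t ht => by
        have ht0 : 0 < t := by linarith
        have habs : x₀ < |t| := by rw [abs_of_pos ht0]; linarith
        have := (htail t habs).2
        rwa [abs_of_pos ht0] at this)
    rw [hFIoi x]
    exact h
  -- left tail bounds (via reflection)
  have left : ∀ x, x ≤ -x₁ →
      f (x - 1) ≤ F x ∧ F x ≤ m₁ / b * Real.exp (-b * (-x) ^ a) := by
    intro x hx
    have hy1 : (1:ℝ) ≤ -x := by linarith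
    have hrefl : (∫ t in Ioi (-x), f (-t)) = F x := by
      rw [hF x]
      have := integral_comp_neg_Ioi (-x) f
      rwa [neg_neg] at this
    have h := tail_bound (fun t => f (-t)) (fun t => hfnn _) hint.comp_neg
      m₁ b a (-x) hm₁pos.le hb ha hy1
      (fun s hs t ht hst => by
        have hsm : -s ≤ m := by
          simp only [mem_Ici] at hs; linarith
        have htm : -t ≤ m := by
          simp only [mem_Ici] at ht; linarith
        exact hmono (mem_Iic.2 htm) (mem_Iic.2 hsm) (neg_le_neg hst))
      (fun t ht => by
        have ht0 : 0 < t := by linarith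
        have habs : x₀ < |(-t)| := by
          rw [abs_neg, abs_of_pos ht0]; linarith
        have := (htail (-t) habs).2
        rwa [abs_neg, abs_of_pos ht0] at this)
    rw [hrefl] at h
    have heq : -x + 1 = -(x - 1) := by ring
    rw [heq] at h
    simp only [neg_neg] at h
    exact h
  -- positivity of endpoints
  have hpos1 : 0 < F (-x₁) := by
    have := (left (-x₁) (le_refl _)).1
    exact lt_of_lt_of_le (hfpos _) this
  have hpos2 : 0 < 1 - F x₁ := by
    have := (right x₁ (le_refl _)).1
    exact lt_of_lt_of_le (hfpos _) this
  -- gamma and constants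
  set γ := min (min (F (-x₁)) (1 - F x₁)) (1 / 2) / 2 with hγdef
  have hγpos : 0 < γ := by
    apply div_pos _ two_pos
    exact lt_min (lt_min hpos1 hpos2) (by norm_num)
  have hγhalf : γ ≤ 1 / 2 := by
    have h1 : min (min (F (-x₁)) (1 - F x₁)) (1 / 2) ≤ 1 / 2 := min_le_right _ _
    rw [hγdef]; linarith
  set α₀ := (2:ℝ) ^ a with hα₀def
  have hα₀pos : 0 < α₀ := Real.rpow_pos_of_pos two_pos a
  set c₀ := min (m₀ / m₁ ^ α₀) (γ / M' ^ α₀) with hc₀def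
  have hc₀pos : 0 < c₀ :=
    lt_min (div_pos hm₀ (Real.rpow_pos_of_pos hm₁pos α₀))
      (div_pos hγpos (Real.rpow_pos_of_pos (lt_of_lt_of_le one_pos hM1) α₀))
  set c₁ := m₁ / (b * m₀) with hc₁def
  have hc₁pos : 0 < c₁ := div_pos hm₁pos (mul_pos hb hm₀)
  refine ⟨γ, ⟨hγpos, hγhalf⟩, c₀, c₁, α₀, 1, hc₀pos, hc₁pos, hα₀pos, one_pos, ?_⟩
  intro x hxmin
  -- case split
  have h2γ : 2 * γ ≤ min (F (-x₁)) (1 - F x₁) := by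
    have := min_le_left (min (F (-x₁)) (1 - F x₁)) (1/2)
    rw [hγdef]; linarith
  have hcase : x ≤ -x₁ ∨ x₁ ≤ x := by
    by_contra h
    push_neg at h
    obtain ⟨h1, h2⟩ := h
    have hF1 : F (-x₁) ≤ F x := hFmono h1.le
    have hF2 : 1 - F x₁ ≤ 1 - F x := by
      have := hFmono h2.le; linarith
    have hg1 : 2 * γ ≤ F x := le_trans (le_trans h2γ (min_le_left _ _)) hF1
    have hg2 : 2 * γ ≤ 1 - F x := le_trans (le_trans h2γ (min_le_right _ _)) hF2
    have : 2 * γ ≤ min (F x) (1 - F x) := le_min hg1 hg2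
    linarith
  rcases hcase with hcase | hcase
  · -- left case: x ≤ -x₁
    set y := -x with hydef
    have hy1 : (1:ℝ) ≤ y := by rw [hydef]; linarith
    have hyx₀ : x₀ < y := by rw [hydef]; linarith
    have habs : x₀ < |x| := by
      rw [abs_of_neg (by linarith : x < 0)]; exact hyx₀
    have hfl : m₀ * Real.exp (-b * y ^ a) ≤ f x := by
      have := (htail x habs).1
      rwa [abs_of_neg (by linarith : x < 0)] at this
    have hfu : f x ≤ m₁ * Real.exp (-b * y ^ a) := by
      have := (htail x habs).2
      rwa [abs_of_neg (by linarith : x < 0)] at this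
    have hT1 : m₀ * Real.exp (-b * (y + 1) ^ a) ≤ F x := by
      have h1 := (left x hcase).1
      have habs2 : x₀ < |x - 1| := by
        rw [abs_of_neg (by linarith : x - 1 < 0)]; linarith
      have h2 := (htail (x - 1) habs2).1
      rw [abs_of_neg (by linarith : x - 1 < 0)] at h2
      have heq : -(x - 1) = y + 1 := by rw [hydef]; ring
      rw [heq] at h2
      linarith
    have hT2 : F x ≤ m₁ / b * Real.exp (-b * y ^ a) := (left x hcase).2
    have hS : γ ≤ 1 - F x := by
      have hF2 : F x ≤ F x₁ := hFmono (by linarith)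
      have := le_trans h2γ (min_le_right _ _)
      linarith
    have h := minmax_bounds m₀ m₁ M' γ b a y (f x) (F x) (1 - F x)
      hm₀ hm₁pos hM1 hγpos hb ha hy1 hfl hfu (hfM x) hT1 hT2 hS
    rw [← hα₀def, ← hc₀def, ← hc₁def] at h
    exact h
  · -- right case: x₁ ≤ x
    have hx1 : (1:ℝ) ≤ x := le_trans hx₁1 hcase
    have hxx₀ : x₀ < x := by linarith
    have habs : x₀ < |x| := by rw [abs_of_pos (by linarith : 0 < x)]; exact hxx₀
    have hfl : m₀ * Real.exp (-b * x ^ a) ≤ f x := by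
      have := (htail x habs).1
      rwa [abs_of_pos (by linarith : 0 < x)] at this
    have hfu : f x ≤ m₁ * Real.exp (-b * x ^ a) := by
      have := (htail x habs).2
      rwa [abs_of_pos (by linarith : 0 < x)] at this
    have hT1 : m₀ * Real.exp (-b * (x + 1) ^ a) ≤ 1 - F x := by
      have h1 := (right x hcase).1
      have habs2 : x₀ < |x + 1| := by
        rw [abs_of_pos (by linarith : 0 < x + 1)]; linarith
      have h2 := (htail (x + 1) habs2).1
      rw [abs_of_pos (by linarith : 0 < x + 1)] at h2
      linarith
    have hT2 : 1 - F x ≤ m₁ / b * Real.exp (-b * x ^ a) := (right x hcase).2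
    have hS : γ ≤ F x := by
      have hF1 : F (-x₁) ≤ F x := hFmono (by linarith)
      have := le_trans h2γ (min_le_left _ _)
      linarith
    have h := minmax_bounds m₀ m₁ M' γ b a x (f x) (1 - F x) (F x)
      hm₀ hm₁pos hM1 hγpos hb ha hx1 hfl hfu (hfM x) hT1 hT2 hS
    rw [← hα₀def, ← hc₀def, ← hc₁def, min_comm (1 - F x) (F x)] at h
    exact h
end

section
/- Consider the additive exponential-noise channel Y = X + Z where Z ~ Exponential(b) and the input X has the mixed distribution with generalized density f_X(x) = (b/(a+b)) δ(x) + (a/(a+b)²) exp(−x/(a+b)) for x ≥ 0 (a, b > 0). Then the output Y is Exponential(a+b)-distributed, and the mutual information equals I(X;Y) = log(1 + a/b). -/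
open MeasureTheory ProbabilityTheory Set

noncomputable section
namespace ExpChanAux

def ef (r x : ℝ) : ℝ := if 0 ≤ x then (1 / r) * Real.exp (-x / r) else 0

lemma ef_nonneg {r : ℝ} (hr : 0 < r) (x : ℝ) : 0 ≤ ef r x := by
  unfold ef; split
  · positivity
  · exact le_rfl

lemma measurable_ef (r : ℝ) : Measurable (ef r) := by
  unfold ef
  exact Measurable.ite measurableSet_Ici
    (measurable_const.mul ((measurable_id.neg.div_const r).exp)) measurable_const

def eM (r : ℝ) : Measure ℝ := volume.withDensity fun x => ENNReal.ofReal (ef r x)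

lemma ef_eq (r x : ℝ) : ENNReal.ofReal (ef r x) = exponentialPDF r⁻¹ x := by
  rw [exponentialPDF_eq]; unfold ef; congr 1
  split_ifs with h
  · rw [one_div]; congr 1; ring
  · rfl

lemma eM_prob {r : ℝ} (hr : 0 < r) : IsProbabilityMeasure (eM r) := by
  constructor
  rw [eM, withDensity_apply _ MeasurableSet.univ, Measure.restrict_univ]
  simp_rw [ef_eq]
  exact lintegral_exponentialPDF_eq_one (inv_pos.2 hr)

lemma eM_neg (r : ℝ) : eM r (Iio 0) = 0 := by
  rw [eM, withDensity_apply _ measurableSet_Iio]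
  have h : EqOn (fun x => ENNReal.ofReal (ef r x)) (fun _ => (0 : ENNReal)) (Iio 0) :=
    fun x hx => by simp [ef, not_le.2 (mem_Iio.1 hx)]
  rw [setLIntegral_congr_fun measurableSet_Iio h, lintegral_zero]

lemma integrableOn_mul_exp {r : ℝ} (hr : 0 < r) :
    IntegrableOn (fun x => x * Real.exp (-x / r)) (Ioi 0) volume := by
  have h0 : IntegrableOn (fun x => Real.exp (-x) * x) (Ioi 0) volume := by
    have h := Real.GammaIntegral_convergent (by norm_num : (0:ℝ) < 2)
    refine h.congr_fun (fun x hx => ?_) measurableSet_Ioi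
    simp only [show (2:ℝ) - 1 = 1 by norm_num, Real.rpow_one]
  have h1 : IntegrableOn (fun x => Real.exp (-(r⁻¹ * x)) * (r⁻¹ * x)) (Ioi 0) volume := by
    have := (integrableOn_Ioi_comp_mul_left_iff (fun x => Real.exp (-x) * x) 0
      (inv_pos.2 hr)).2 (by simpa using h0)
    simpa using this
  refine IntegrableOn.congr_fun (h1.const_mul r) (fun x hx => ?_) measurableSet_Ioi
  field_simp

lemma integral_mul_exp {r : ℝ} (hr : 0 < r) :
    ∫ x in Ioi 0, x * Real.exp (-x / r) = r ^ 2 := by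
  have h1 : ∫ x in Ioi 0, Real.exp (-x) * x = 1 := by
    have h := (Real.Gamma_eq_integral (by norm_num : (0:ℝ) < 2)).symm
    rw [Real.Gamma_two] at h
    rw [← h]
    refine setIntegral_congr_fun measurableSet_Ioi (fun x hx => ?_)
    rw [show (2:ℝ) - 1 = 1 by norm_num, Real.rpow_one]
  have h2 := integral_comp_mul_left_Ioi (fun x => Real.exp (-x) * x) 0 (inv_pos.2 hr)
  rw [mul_zero, h1, inv_inv, smul_eq_mul, mul_one] at h2
  calc ∫ x in Ioi 0, x * Real.exp (-x / r)
      = ∫ x in Ioi 0, r * (Real.exp (-(r⁻¹ * x)) * (r⁻¹ * x)) := by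
        refine setIntegral_congr_fun measurableSet_Ioi (fun x hx => ?_)
        field_simp
    _ = r * r := by rw [integral_const_mul, h2]
    _ = r ^ 2 := by ring

lemma integrableOn_Iic_id_mul_ef {r : ℝ} : IntegrableOn (fun x => x * ef r x) (Iic 0) volume := by
  refine IntegrableOn.congr_fun (integrableOn_zero : IntegrableOn (fun _ : ℝ => (0:ℝ)) _ _)
    (fun x hx => ?_) measurableSet_Iic
  rcases lt_or_eq_of_le (mem_Iic.1 hx) with h | h
  · simp [ef, not_le.2 h]
  · simp [h]

lemma integrableOn_Ioi_id_mul_ef {r : ℝ} (hr : 0 < r) :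
    IntegrableOn (fun x => x * ef r x) (Ioi 0) volume := by
  refine IntegrableOn.congr_fun ((integrableOn_mul_exp hr).const_mul (1 / r))
    (fun x hx => ?_) measurableSet_Ioi
  simp only [ef, if_pos (le_of_lt (mem_Ioi.1 hx))]
  ring

lemma integrable_id_mul_ef {r : ℝ} (hr : 0 < r) :
    Integrable (fun x => x * ef r x) volume := by
  have h := integrableOn_Iic_id_mul_ef (r := r) |>.union (integrableOn_Ioi_id_mul_ef hr)
  rwa [Iic_union_Ioi, integrableOn_univ] at h

lemma integral_id_mul_ef {r : ℝ} (hr : 0 < r) : ∫ x, x * ef r x = r := by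
  rw [← intervalIntegral.integral_Iic_add_Ioi integrableOn_Iic_id_mul_ef (integrableOn_Ioi_id_mul_ef hr)]
  have h1 : ∫ x in Iic (0:ℝ), x * ef r x = 0 := by
    rw [setIntegral_congr_fun measurableSet_Iic (g := fun _ => (0:ℝ)) (fun x hx => ?_),
      integral_zero]
    rcases lt_or_eq_of_le (mem_Iic.1 hx) with h | h
    · simp [ef, not_le.2 h]
    · simp [h]
  have h2 : ∫ x in Ioi (0:ℝ), x * ef r x = r := by
    rw [setIntegral_congr_fun measurableSet_Ioi
      (g := fun x => (1 / r) * (x * Real.exp (-x / r))) (fun x hx => ?_)]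
    · rw [integral_const_mul, integral_mul_exp hr]
      field_simp
    · simp only [ef, if_pos (le_of_lt (mem_Ioi.1 hx))]
      ring
  rw [h1, h2, zero_add]

lemma integrable_id_eM {r : ℝ} (hr : 0 < r) : Integrable (fun x : ℝ => x) (eM r) := by
  rw [eM, integrable_withDensity_iff ((measurable_ef r).ennreal_ofReal)
    (ae_of_all _ fun x => ENNReal.ofReal_lt_top)]
  simp_rw [ENNReal.toReal_ofReal (ef_nonneg hr _)]
  exact integrable_id_mul_ef hr

lemma integral_id_eM {r : ℝ} (hr : 0 < r) : ∫ x, x ∂(eM r) = r := by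
  have h : eM r = volume.withDensity (fun x => ((ef r x).toNNReal : ENNReal)) := rfl
  rw [h, integral_withDensity_eq_integral_smul ((measurable_ef r).real_toNNReal) (fun x => x)]
  simp_rw [NNReal.smul_def, Real.coe_toNNReal _ (ef_nonneg hr _), smul_eq_mul, mul_comm]
  exact integral_id_mul_ef hr

def G (a b : ℝ) : ℝ × ℝ → ENNReal := fun p =>
  ENNReal.ofReal (if 0 ≤ p.1 ∧ p.1 ≤ p.2 then
    ((a + b) / b) * Real.exp (p.1 / b - a * p.2 / (b * (a + b))) else 0)

lemma measurable_G (a b : ℝ) : Measurable (G a b) := by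
  apply Measurable.ennreal_ofReal
  refine Measurable.ite ?_ ?_ measurable_const
  · exact (measurableSet_le measurable_const measurable_fst).inter
      (measurableSet_le measurable_fst measurable_snd)
  · exact measurable_const.mul
      (((measurable_fst.div_const b).sub ((measurable_snd.const_mul a).div_const _)).exp)

lemma key_pt {a b : ℝ} (ha : 0 < a) (hb : 0 < b) {x : ℝ} (hx : 0 ≤ x) (y : ℝ) :
    ENNReal.ofReal (ef (a + b) y) * G a b (x, y) = ENNReal.ofReal (ef b (y - x)) := by
  have hc : 0 < a + b := by linarith
  by_cases hxy : x ≤ y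
  · have hy : 0 ≤ y := hx.trans hxy
    have hyx : 0 ≤ y - x := sub_nonneg.2 hxy
    simp only [G, ef, if_pos hy, if_pos hyx, if_pos (⟨hx, hxy⟩ : 0 ≤ x ∧ x ≤ y)]
    rw [← ENNReal.ofReal_mul (by positivity)]
    congr 1
    rw [mul_mul_mul_comm, ← Real.exp_add]
    have h1 : (1 / (a + b)) * ((a + b) / b) = 1 / b := by field_simp
    rw [h1]
    congr 1
    congr 1
    field_simp
    ring
  · have hyx : ¬ (0 ≤ y - x) := by simp only [sub_nonneg]; exact hxy
    simp only [G, ef, if_neg hyx, if_neg (fun h : 0 ≤ x ∧ x ≤ y => hxy h.2)]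
    simp

lemma slice_eq {a b : ℝ} (ha : 0 < a) (hb : 0 < b) {x : ℝ} (hx : 0 ≤ x) {B : Set ℝ}
    (hB : MeasurableSet B) :
    ∫⁻ y in B, G a b (x, y) ∂(eM (a + b)) = eM b ((fun z => x + z) ⁻¹' B) := by
  have hg : Measurable fun y => G a b (x, y) := (measurable_G a b).comp measurable_prodMk_left
  rw [eM, restrict_withDensity hB,
    lintegral_withDensity_eq_lintegral_mul _ ((measurable_ef _).ennreal_ofReal) hg]
  have h1 : ∫⁻ y in B, ENNReal.ofReal (ef (a + b) y) * G a b (x, y) ∂volume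
      = ∫⁻ y in B, ENNReal.ofReal (ef b (y - x)) ∂volume :=
    setLIntegral_congr_fun hB (fun y _ => key_pt ha hb hx y)
  rw [show (fun y => ENNReal.ofReal (ef (a+b) y) * G a b (x, y))
      = fun y => ((fun x => ENNReal.ofReal (ef (a+b) x)) * fun y => G a b (x, y)) y from rfl] at h1
  rw [h1, ← (measurePreserving_add_left volume x).setLIntegral_comp_preimage_emb
    (measurableEmbedding_addLeft x) (fun y => ENNReal.ofReal (ef b (y - x))) B]
  simp only [add_sub_cancel_left]
  rw [eM, withDensity_apply _ (hB.preimage (measurable_id'.const_add x))]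
lemma marginal_eq {a b : ℝ} (ha : 0 < a) (hb : 0 < b) {y : ℝ} (hy : 0 ≤ y) :
    ∫⁻ x, G a b (x, y) ∂(ENNReal.ofReal (b / (a + b)) • Measure.dirac (0:ℝ)
      + volume.withDensity (fun x => ENNReal.ofReal
          (if 0 ≤ x then a / (a + b) ^ 2 * Real.exp (-x / (a + b)) else 0))) = 1 := by
  have hc : 0 < a + b := by linarith
  set k : ℝ := a / (b * (a + b)) with hk
  have hkpos : 0 < k := by positivity
  have hky : 0 ≤ k * y := mul_nonneg hkpos.le hy
  have hgm : Measurable fun x => G a b (x, y) :=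
    (measurable_G a b).comp (measurable_id.prodMk measurable_const)
  have hfm : Measurable fun x : ℝ => ENNReal.ofReal
      (if 0 ≤ x then a / (a + b) ^ 2 * Real.exp (-x / (a + b)) else 0) := by
    apply Measurable.ennreal_ofReal
    exact Measurable.ite measurableSet_Ici
      (measurable_const.mul ((measurable_id.neg.div_const _).exp)) measurable_const
  rw [lintegral_add_measure, lintegral_smul_measure, lintegral_dirac' _ hgm,
    lintegral_withDensity_eq_lintegral_mul _ hfm hgm]
  have hδ : G a b (0, y) = ENNReal.ofReal (((a + b) / b) * Real.exp (-(k * y))) := by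
    simp only [G, if_pos (⟨le_rfl, hy⟩ : (0:ℝ) ≤ 0 ∧ (0:ℝ) ≤ y)]
    congr 2
    rw [hk]; field_simp; congr 1; ring
  have hpt : ((fun x : ℝ => ENNReal.ofReal
        (if 0 ≤ x then a / (a + b) ^ 2 * Real.exp (-x / (a + b)) else 0))
        * fun x => G a b (x, y))
      = fun x => ENNReal.ofReal ((Icc (0:ℝ) y).indicator
          (fun x => k * Real.exp (k * x - k * y)) x) := by
    funext x
    simp only [Pi.mul_apply, Set.indicator_apply, mem_Icc]
    by_cases h0 : 0 ≤ x
    · by_cases h1 : x ≤ y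
      · simp only [G, if_pos h0, if_pos (⟨h0, h1⟩ : 0 ≤ x ∧ x ≤ y), if_pos (⟨h0, h1⟩ : 0 ≤ x ∧ x ≤ y)]
        rw [← ENNReal.ofReal_mul (by positivity)]
        congr 1
        rw [mul_mul_mul_comm, ← Real.exp_add]
        have h2 : a / (a + b) ^ 2 * ((a + b) / b) = k := by rw [hk]; field_simp
        rw [h2]
        congr 1
        rw [hk]; field_simp; ring
      · simp only [G, if_neg (fun h : 0 ≤ x ∧ x ≤ y => h1 h.2),
          if_neg (fun h : 0 ≤ x ∧ x ≤ y => h1 h.2)]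
        simp
    · simp only [if_neg h0, if_neg (fun h : 0 ≤ x ∧ x ≤ y => h0 h.1)]
      simp
  rw [hpt]
  have hcont : Continuous fun x : ℝ => k * Real.exp (k * x - k * y) := by fun_prop
  have hInt : Integrable ((Icc (0:ℝ) y).indicator fun x => k * Real.exp (k * x - k * y)) volume :=
    (hcont.integrableOn_Icc).integrable_indicator measurableSet_Icc
  rw [← ofReal_integral_eq_lintegral_ofReal hInt (ae_of_all _ fun x =>
    Set.indicator_nonneg (fun x _ => by positivity) x)]
  have hval : ∫ x, (Icc (0:ℝ) y).indicator (fun x => k * Real.exp (k * x - k * y)) x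
      = 1 - Real.exp (-(k * y)) := by
    rw [integral_indicator measurableSet_Icc, integral_Icc_eq_integral_Ioc,
      ← intervalIntegral.integral_of_le hy]
    have h3 : ∀ x : ℝ, k * Real.exp (k * x - k * y)
        = (k * Real.exp (-(k * y))) * Real.exp (x * k) := fun x => by
      rw [show k * x - k * y = -(k * y) + x * k by ring, Real.exp_add]; ring
    simp_rw [h3]
    rw [intervalIntegral.integral_const_mul,
      intervalIntegral.integral_comp_mul_right Real.exp hkpos.ne', integral_exp]
    rw [Real.exp_neg, zero_mul, Real.exp_zero, smul_eq_mul, mul_comm y k]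
    have hk0 : k ≠ 0 := hkpos.ne'
    field_simp
  rw [hval, hδ, smul_eq_mul, ← ENNReal.ofReal_mul (by positivity)]
  have h4 : b / (a + b) * ((a + b) / b * Real.exp (-(k * y))) = Real.exp (-(k * y)) := by
    field_simp
  rw [h4, ← ENNReal.ofReal_add (by positivity) ?_]
  · norm_num
  · rw [sub_nonneg, ← Real.exp_zero]
    exact Real.exp_le_exp.2 (by linarith)
lemma wd_neg (f : ℝ → ℝ) :
    volume.withDensity (fun x => ENNReal.ofReal (if 0 ≤ x then f x else 0)) (Iio 0) = 0 := by
  rw [withDensity_apply _ measurableSet_Iio]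
  have h : EqOn (fun x : ℝ => ENNReal.ofReal (if 0 ≤ x then f x else 0))
      (fun _ => (0 : ENNReal)) (Iio 0) :=
    fun x hx => by simp [not_le.2 (mem_Iio.1 hx)]
  rw [setLIntegral_congr_fun measurableSet_Iio h, lintegral_zero]

lemma ae_nonneg_of_Iio_zero {ν : Measure ℝ} (h : ν (Iio 0) = 0) : ∀ᵐ x ∂ν, 0 ≤ x := by
  have hs : {x : ℝ | ¬ 0 ≤ x} = Iio 0 := by ext x; simp [not_le]
  rw [ae_iff, hs]
  exact h

end ExpChanAux
end

/-- additive exponential-noise channel with the mean-constrained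
capacity-achieving mixed input: the output is `Exponential(a+b)` and the
mutual information equals `log₂(1 + a/b)`. -/
theorem exponential_channel_output_and_mutual_information
    {Ω : Type*} [MeasurableSpace Ω] (μ : Measure Ω) [IsProbabilityMeasure μ]
    (a b : ℝ) (ha : 0 < a) (hb : 0 < b)
    (X Z Y : Ω → ℝ) (hX : Measurable X) (hZ : Measurable Z)
    (hZlaw : Measure.map Z μ = volume.withDensity
      (fun z => ENNReal.ofReal (if 0 ≤ z then (1 / b) * Real.exp (-z / b) else 0)))
    (hXlaw : Measure.map X μ
      = ENNReal.ofReal (b / (a + b)) • Measure.dirac (0:ℝ)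
        + volume.withDensity (fun x => ENNReal.ofReal
            (if 0 ≤ x then a / (a + b) ^ 2 * Real.exp (-x / (a + b)) else 0)))
    (hindep : IndepFun X Z μ)
    (hY : ∀ ω, Y ω = X ω + Z ω) :
    Measure.map Y μ = volume.withDensity
      (fun y => ENNReal.ofReal
        (if 0 ≤ y then (1 / (a + b)) * Real.exp (-y / (a + b)) else 0)) ∧
    (∫ ω, Real.logb 2
        (((Measure.map (fun ω => (X ω, Y ω)) μ).rnDeriv
            ((Measure.map X μ).prod (Measure.map Y μ)) (X ω, Y ω)).toReal) ∂μ)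
      = Real.logb 2 (1 + a / b) := by

  classical
  have hc : 0 < a + b := by linarith
  have hYeq : Y = fun ω => X ω + Z ω := funext hY
  have hYm : Measurable Y := by rw [hYeq]; exact hX.add hZ
  have hZlaw' : Measure.map Z μ = ExpChanAux.eM b := hZlaw
  haveI : IsProbabilityMeasure (Measure.map X μ) := Measure.isProbabilityMeasure_map hX.aemeasurable
  haveI hPc : IsProbabilityMeasure (ExpChanAux.eM (a+b)) := ExpChanAux.eM_prob hc
  haveI hPb : IsProbabilityMeasure (ExpChanAux.eM b) := ExpChanAux.eM_prob hb
  have hXneg : (Measure.map X μ) (Iio 0) = 0 := by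
    rw [hXlaw, Measure.add_apply, Measure.smul_apply,
      Measure.dirac_apply' _ measurableSet_Iio, ExpChanAux.wd_neg]
    simp
  have hX0' : ∀ᵐ x ∂(Measure.map X μ), 0 ≤ x := ExpChanAux.ae_nonneg_of_Iio_zero hXneg
  set T : ℝ × ℝ → ℝ × ℝ := fun p => (p.1, p.1 + p.2) with hT
  have hTm : Measurable T := measurable_fst.prodMk (measurable_fst.add measurable_snd)
  have hXZ : Measure.map (fun ω => (X ω, Z ω)) μ = (Measure.map X μ).prod (ExpChanAux.eM b) := by
    rw [← hZlaw']
    exact (indepFun_iff_map_prod_eq_prod_map_map hX.aemeasurable hZ.aemeasurable).mp hindep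
  have hπ0 : Measure.map (fun ω => (X ω, Y ω)) μ = Measure.map T ((Measure.map X μ).prod (ExpChanAux.eM b)) := by
    have hcomp : (fun ω => (X ω, Y ω)) = T ∘ (fun ω => (X ω, Z ω)) := by
      funext ω; simp [hT, hY ω]
    rw [hcomp, ← Measure.map_map hTm (hX.prodMk hZ), hXZ]
  have hrect : ∀ A B : Set ℝ, MeasurableSet A → MeasurableSet B →
      Measure.map T ((Measure.map X μ).prod (ExpChanAux.eM b)) (A ×ˢ B)
        = ((Measure.map X μ).prod (ExpChanAux.eM (a+b))).withDensity (ExpChanAux.G a b) (A ×ˢ B) := by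
    intro A B hA hB
    rw [Measure.map_apply hTm (hA.prod hB), Measure.prod_apply (hTm (hA.prod hB))]
    have h5 : ∀ x : ℝ, Prod.mk x ⁻¹' (T ⁻¹' (A ×ˢ B))
        = if x ∈ A then (fun z => x + z) ⁻¹' B else ∅ := by
      intro x
      by_cases hxA : x ∈ A
      · ext z; simp [hT, hxA]
      · ext z; simp [hT, hxA]
    simp_rw [h5, apply_ite (ExpChanAux.eM b), measure_empty]
    rw [withDensity_apply _ (hA.prod hB), ← Measure.prod_restrict,
      lintegral_prod _ (ExpChanAux.measurable_G a b).aemeasurable]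
    rw [← lintegral_indicator hA]
    refine lintegral_congr_ae ?_
    filter_upwards [hX0'] with x hx
    by_cases hxA : x ∈ A
    · rw [if_pos hxA, Set.indicator_of_mem hxA]
      exact (ExpChanAux.slice_eq ha hb hx hB).symm
    · rw [if_neg hxA, Set.indicator_of_notMem hxA]
  have hkey : Measure.map T ((Measure.map X μ).prod (ExpChanAux.eM b))
      = ((Measure.map X μ).prod (ExpChanAux.eM (a+b))).withDensity (ExpChanAux.G a b) := by
    haveI : IsProbabilityMeasure (Measure.map T ((Measure.map X μ).prod (ExpChanAux.eM b))) :=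
      Measure.isProbabilityMeasure_map hTm.aemeasurable
    refine ext_of_generate_finite _ generateFrom_prod.symm isPiSystem_prod ?_ ?_
    · rintro s ⟨A, hA, B, hB, rfl⟩
      exact hrect A B hA hB
    · have := hrect univ univ MeasurableSet.univ MeasurableSet.univ
      rwa [univ_prod_univ] at this
  have hπ : Measure.map (fun ω => (X ω, Y ω)) μ
      = ((Measure.map X μ).prod (ExpChanAux.eM (a+b))).withDensity (ExpChanAux.G a b) := by
    rw [hπ0, hkey]
  have hY0c : ∀ᵐ y ∂(ExpChanAux.eM (a+b)), 0 ≤ y :=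
    ExpChanAux.ae_nonneg_of_Iio_zero (ExpChanAux.eM_neg _)
  have part1 : Measure.map Y μ = ExpChanAux.eM (a+b) := by
    have h6 : Measure.map Y μ = Measure.map Prod.snd (Measure.map (fun ω => (X ω, Y ω)) μ) := by
      rw [Measure.map_map measurable_snd (hX.prodMk hYm)]
      rfl
    rw [h6, hπ]
    ext B hB
    rw [Measure.map_apply measurable_snd hB, withDensity_apply _ (measurable_snd hB)]
    have h7 : Prod.snd ⁻¹' B = (univ : Set ℝ) ×ˢ B := by ext p; simp
    rw [h7, ← Measure.prod_restrict, Measure.restrict_univ,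
      lintegral_prod_symm _ (ExpChanAux.measurable_G a b).aemeasurable]
    have h8 : ∀ᵐ y ∂((ExpChanAux.eM (a+b)).restrict B),
        (∫⁻ x, ExpChanAux.G a b (x, y) ∂(Measure.map X μ)) = 1 := by
      refine ae_restrict_of_ae ?_
      filter_upwards [hY0c] with y hy
      rw [hXlaw]
      exact ExpChanAux.marginal_eq ha hb hy
    rw [lintegral_congr_ae h8, setLIntegral_one]
  refine ⟨part1, ?_⟩
  rw [part1]
  have hrnG : (Measure.map (fun ω => (X ω, Y ω)) μ).rnDeriv ((Measure.map X μ).prod (ExpChanAux.eM (a+b)))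
      =ᵐ[Measure.map (fun ω => (X ω, Y ω)) μ] ExpChanAux.G a b := by
    rw [hπ]
    exact (Measure.rnDeriv_withDensity ((Measure.map X μ).prod (ExpChanAux.eM (a+b)))
      (ExpChanAux.measurable_G a b)).filter_mono
        (withDensity_absolutelyContinuous _ _).ae_le
  have hωeq : ∀ᵐ ω ∂μ,
      (Measure.map (fun ω => (X ω, Y ω)) μ).rnDeriv ((Measure.map X μ).prod (ExpChanAux.eM (a+b)))
        (X ω, Y ω) = ExpChanAux.G a b (X ω, Y ω) :=
    ae_of_ae_map (hX.prodMk hYm).aemeasurable hrnG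
  have hZ0 : ∀ᵐ ω ∂μ, 0 ≤ Z ω := by
    apply ae_of_ae_map hZ.aemeasurable
    exact ExpChanAux.ae_nonneg_of_Iio_zero (hZlaw' ▸ ExpChanAux.eM_neg b)
  have hX0 : ∀ᵐ ω ∂μ, 0 ≤ X ω := ae_of_ae_map hX.aemeasurable hX0'
  have hcongr : ∀ᵐ ω ∂μ,
      Real.logb 2 (((Measure.map (fun ω => (X ω, Y ω)) μ).rnDeriv
          ((Measure.map X μ).prod (ExpChanAux.eM (a+b))) (X ω, Y ω)).toReal)
        = Real.logb 2 ((a+b)/b) + (Y ω / (a+b) - Z ω / b) / Real.log 2 := by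
    filter_upwards [hωeq, hX0, hZ0] with ω h1 h2 h3
    rw [h1]
    have hxy : X ω ≤ Y ω := by rw [hY ω]; linarith
    simp only [ExpChanAux.G, if_pos (⟨h2, hxy⟩ : 0 ≤ X ω ∧ X ω ≤ Y ω)]
    rw [ENNReal.toReal_ofReal (by positivity)]
    have ht : X ω / b - a * Y ω / (b * (a + b)) = Y ω / (a+b) - Z ω / b := by
      rw [hY ω]; field_simp; ring
    rw [Real.logb, Real.log_mul (by positivity) (Real.exp_ne_zero _), Real.log_exp, ht,
      add_div, Real.logb]
  rw [integral_congr_ae hcongr]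
  have hIntZ : Integrable Z μ := by
    have h := ExpChanAux.integrable_id_eM hb
    rw [← hZlaw'] at h
    exact (integrable_map_measure aestronglyMeasurable_id hZ.aemeasurable).mp h
  have hIntY : Integrable Y μ := by
    have h := ExpChanAux.integrable_id_eM hc
    rw [← part1] at h
    exact (integrable_map_measure aestronglyMeasurable_id hYm.aemeasurable).mp h
  have hEZ : ∫ ω, Z ω ∂μ = b := by
    have h := integral_map hZ.aemeasurable
      (aestronglyMeasurable_id (μ := Measure.map Z μ))
    simp only [id_eq] at h
    rw [hZlaw'] at h
    rw [← h]
    exact ExpChanAux.integral_id_eM hb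
  have hEY : ∫ ω, Y ω ∂μ = a + b := by
    have h := integral_map hYm.aemeasurable
      (aestronglyMeasurable_id (μ := Measure.map Y μ))
    simp only [id_eq] at h
    rw [part1] at h
    rw [← h]
    exact ExpChanAux.integral_id_eM hc
  have hInt2 : Integrable (fun ω => (Y ω / (a+b) - Z ω / b) / Real.log 2) μ :=
    ((hIntY.div_const _).sub (hIntZ.div_const _)).div_const _
  rw [integral_add (integrable_const _) hInt2, integral_const, integral_div,
    integral_sub (hIntY.div_const _) (hIntZ.div_const _), integral_div, integral_div,
    hEY, hEZ]
  have h9 : ((a+b)/(a+b) - b/b) = 0 := by rw [div_self hc.ne', div_self hb.ne', sub_self]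
  rw [h9]
  have h10 : (a+b)/b = 1 + a/b := by field_simp; ring
  rw [h10]
  simp
end
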